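/- arXiv:1111.6845 — 12 statements merged into one kernel-verified Lean document; each statement's English description precedes it below -/
import Mathlib

section
/- Let G = (V,E) be a decomposable (chordal) graph on p vertices, and let σ be an ordering of V which is a perfect vertex elimination scheme for G. Then for any p×p real positive definite matrix Σ with modified Cholesky decomposition Σ = LDLᵀ, one has L ∈ 𝓛_{G_σ} if and only if Σ ∈ P_{G_σ}. -/
open Matrix BigOperators

/-- The closed neighborhood `N[v]` of a vertex `v`. -/
def cNbhd {V : Type*} (G : SimpleGraph V) (v : V) : Set V :=
  {u | u = v ∨ G.Adj u v}

/-- A graph is homogeneous (co-chordal) if for every edge `(v,v')`, the closed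
neighborhoods are nested. -/
def Homogeneous {V : Type*} (G : SimpleGraph V) : Prop :=
  ∀ v v' : V, G.Adj v v' → cNbhd G v' ⊆ cNbhd G v ∨ cNbhd G v ⊆ cNbhd G v'

/-- `σ` is a Hasse tree based elimination scheme: whenever `u → v`
(`N[v] ⊆ N[u]`) and `N[u] ≠ N[v]`, one has `σ(u) > σ(v)`. -/
def HasseElimScheme {V : Type*} {p : ℕ} (G : SimpleGraph V) (σ : V ≃ Fin p) : Prop :=
  ∀ u v : V, cNbhd G v ⊆ cNbhd G u → cNbhd G u ≠ cNbhd G v → σ v < σ u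

/-- `σ` is a perfect vertex elimination scheme for `G`. -/
def PerfectElimScheme {V : Type*} {p : ℕ} (G : SimpleGraph V) (σ : V ≃ Fin p) : Prop :=
  ∀ i j k : Fin p, i < j → j < k →
    G.Adj (σ.symm j) (σ.symm i) → G.Adj (σ.symm k) (σ.symm i) →
      G.Adj (σ.symm k) (σ.symm j)

/-- `G` has an induced cycle on at least `4` vertices. -/
def HasInducedCycleGE4 {V : Type*} (G : SimpleGraph V) : Prop :=
  ∃ (n : ℕ) (f : Fin n → V), 4 ≤ n ∧ Function.Injective f ∧
    ∀ i j : Fin n, G.Adj (f i) (f j) ↔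
      (((i : ℕ) + 1) % n = (j : ℕ) ∨ ((j : ℕ) + 1) % n = (i : ℕ))

/-- A graph is decomposable (chordal) if it has no induced cycle of length `≥ 4`. -/
def Decomposable {V : Type*} (G : SimpleGraph V) : Prop := ¬ HasInducedCycleGE4 G

/-- `G` has an induced path on `4` vertices. -/
def HasInducedPath4 {V : Type*} (G : SimpleGraph V) : Prop :=
  ∃ a b c d : V, a ≠ b ∧ a ≠ c ∧ a ≠ d ∧ b ≠ c ∧ b ≠ d ∧ c ≠ d ∧
    G.Adj a b ∧ G.Adj b c ∧ G.Adj c d ∧ ¬ G.Adj a c ∧ ¬ G.Adj a d ∧ ¬ G.Adj b d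

/-- `G` has an induced cycle on `4` vertices. -/
def HasInducedCycle4 {V : Type*} (G : SimpleGraph V) : Prop :=
  ∃ a b c d : V, a ≠ b ∧ a ≠ c ∧ a ≠ d ∧ b ≠ c ∧ b ≠ d ∧ c ≠ d ∧
    G.Adj a b ∧ G.Adj b c ∧ G.Adj c d ∧ G.Adj d a ∧ ¬ G.Adj a c ∧ ¬ G.Adj b d

/-- `C` is a maximal clique of `G`. -/
def IsMaxClique {V : Type*} (G : SimpleGraph V) (C : Finset V) : Prop :=
  G.IsClique (C : Set V) ∧
    ∀ C' : Finset V, G.IsClique (C' : Set V) → C ⊆ C' → C = C'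

/-- Membership in the class `𝓛_{G_σ}`: unit diagonal, and `L i j = 0` whenever
`i < j` or the corresponding vertices are not adjacent. -/
def memL {V : Type*} {p : ℕ} (G : SimpleGraph V) (σ : V ≃ Fin p)
    (L : Matrix (Fin p) (Fin p) ℝ) : Prop :=
  (∀ i, L i i = 1) ∧
    ∀ i j : Fin p, i ≠ j → (i < j ∨ ¬ G.Adj (σ.symm i) (σ.symm j)) → L i j = 0

/-- Membership in the class `P_{G_σ}`: positive definite, with `A i j = 0` whenever
the corresponding vertices are distinct and not adjacent. -/
def memP {V : Type*} {p : ℕ} (G : SimpleGraph V) (σ : V ≃ Fin p)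
    (A : Matrix (Fin p) (Fin p) ℝ) : Prop :=
  A.PosDef ∧ ∀ i j : Fin p, i ≠ j → ¬ G.Adj (σ.symm i) (σ.symm j) → A i j = 0

/-- Lower triangular with unit diagonal. -/
def LowerUnitri {p : ℕ} (L : Matrix (Fin p) (Fin p) ℝ) : Prop :=
  (∀ i, L i i = 1) ∧ ∀ i j : Fin p, i < j → L i j = 0

/-- Diagonal matrix with positive diagonal entries. -/
def PosDiag {p : ℕ} (D : Matrix (Fin p) (Fin p) ℝ) : Prop :=
  (∀ i j : Fin p, i ≠ j → D i j = 0) ∧ ∀ i, 0 < D i i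

/-- Determinant of the principal submatrix of `A` with rows and columns in `S`. -/
noncomputable def principalDet {p : ℕ} (A : Matrix (Fin p) (Fin p) ℝ)
    (S : Finset (Fin p)) : ℝ :=
  (A.submatrix (fun x : S => (x : Fin p)) (fun x : S => (x : Fin p))).det

/-- Paulsen et al.: for a decomposable graph with a perfect vertex elimination scheme,
zeros are preserved between `Σ` and its Cholesky factor `L`. -/
theorem statement2 {V : Type*} [Fintype V] {p : ℕ} (G : SimpleGraph V) (σ : V ≃ Fin p)
    (hG : Decomposable G) (hσ : PerfectElimScheme G σ)
    (A L D : Matrix (Fin p) (Fin p) ℝ) (hA : A.PosDef)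
    (hL : LowerUnitri L) (hD : PosDiag D) (hdec : A = L * D * Lᵀ) :
    memL G σ L ↔ memP G σ A := by
  have hDeq : D = Matrix.diagonal (fun i => D i i) := by
    ext i j
    by_cases h : i = j
    · subst h; simp
    · rw [hD.1 i j h, Matrix.diagonal_apply_ne _ h]
  have entry : ∀ i j, A i j = ∑ k, L i k * D k k * L j k := by
    intro i j
    rw [hdec, hDeq, Matrix.mul_apply]
    simp [Matrix.mul_diagonal, Matrix.transpose_apply]
  constructor
  · -- memL → memP
    intro hmemL
    have key : ∀ a b : Fin p, a ≠ b → L a b ≠ 0 →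
        b < a ∧ G.Adj (σ.symm a) (σ.symm b) := by
      intro a b hab hnz
      have hba : ¬ a < b := fun h => hnz (hmemL.2 a b hab (Or.inl h))
      refine ⟨(not_lt.mp hba).lt_of_ne hab.symm, ?_⟩
      by_contra hadj
      exact hnz (hmemL.2 a b hab (Or.inr hadj))
    refine ⟨hA, ?_⟩
    intro i j hij hadj
    rw [entry i j]
    refine Finset.sum_eq_zero fun k _ => ?_
    by_cases hLik : L i k = 0
    · rw [hLik]; ring
    by_cases hLjk : L j k = 0
    · rw [hLjk]; ring
    exfalso
    by_cases hik : i = k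
    · subst hik
      have hjk : j ≠ i := hij.symm
      obtain ⟨hlt, hadj'⟩ := key j i hjk hLjk
      exact hadj hadj'.symm
    by_cases hjk : j = k
    · subst hjk
      obtain ⟨hlt, hadj'⟩ := key i j hik hLik
      exact hadj hadj'
    obtain ⟨hki, hadji⟩ := key i k hik hLik
    obtain ⟨hkj, hadjj⟩ := key j k hjk hLjk
    rcases lt_or_gt_of_ne hij with h | h
    · exact hadj (hσ k i j hki h hadji hadjj).symm
    · exact hadj (hσ k j i hkj h hadjj hadji)
  · -- memP → memL
    intro hmemP
    have claim : ∀ n : ℕ, ∀ j : Fin p, (j : ℕ) < n → ∀ i : Fin p, j < i →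
        ¬ G.Adj (σ.symm i) (σ.symm j) → L i j = 0 := by
      intro n
      induction n with
      | zero => intro j hj; omega
      | succ n ih =>
        intro j hj i hji hadj
        have hAij : A i j = 0 := hmemP.2 i j hji.ne' hadj
        rw [entry i j] at hAij
        rw [Finset.sum_eq_single j] at hAij
        · rw [hL.1 j, mul_one] at hAij
          have hDj := (hD.2 j).ne'
          exact (mul_eq_zero.mp hAij).resolve_right hDj
        · intro k _ hkj
          rcases lt_or_gt_of_ne hkj with hlt | hgt
          · -- k < j
            have hkn : (k : ℕ) < n := by
              have := Fin.lt_iff_val_lt_val.mp hlt; omega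
            by_cases hadjik : G.Adj (σ.symm i) (σ.symm k)
            · by_cases hadjjk : G.Adj (σ.symm j) (σ.symm k)
              · exact absurd (hσ k j i hlt hji hadjjk hadjik) hadj
              · rw [ih k hkn j hlt hadjjk]; ring
            · rw [ih k hkn i (hlt.trans hji) hadjik]; ring
          · rw [hL.2 j k hgt]; ring
        · intro h; exact absurd (Finset.mem_univ j) h
    refine ⟨hL.1, ?_⟩
    intro i j hij hcase
    rcases hcase with hlt | hadj
    · exact hL.2 i j hlt
    · rcases lt_or_gt_of_ne hij with hlt | hgt
      · exact hL.2 i j hlt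
      · exact claim ((j : ℕ) + 1) j (by omega) i hgt hadj
end

section
/- Let G = (V,E) be a finite simple graph on p vertices and σ an ordering of V. Suppose that for every p×p diagonal matrix D with positive diagonal entries and every p×p lower triangular matrix L with unit diagonal, L ∈ 𝓛_{G_σ} if and only if LDLᵀ ∈ P_{G_σ}. Then G is a decomposable (chordal) graph and σ is a perfect vertex elimination scheme for G. -/
open Matrix BigOperators

/-- Converse of the Paulsen et al. result: if zeros are always preserved between
`L` and `LDLᵀ`, then `G` is decomposable and `σ` is a perfect vertex elimination
scheme. -/
theorem statement3 {V : Type*} [Fintype V] {p : ℕ} (G : SimpleGraph V) (σ : V ≃ Fin p)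
    (H : ∀ D : Matrix (Fin p) (Fin p) ℝ, PosDiag D →
      ∀ L : Matrix (Fin p) (Fin p) ℝ, LowerUnitri L →
        (memL G σ L ↔ memP G σ (L * D * Lᵀ))) :
    Decomposable G ∧ PerfectElimScheme G σ := by
  have hpes : PerfectElimScheme G σ := by
    intro i j k hij hjk hji hki
    by_contra hkj
    have hik : i ≠ k := (hij.trans hjk).ne
    have hjk' : j ≠ k := hjk.ne
    set L : Matrix (Fin p) (Fin p) ℝ :=
      fun a b => if a = b then 1 else if (a = j ∧ b = i) ∨ (a = k ∧ b = i) then 1 else 0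
      with hLdef
    have hD : PosDiag (1 : Matrix (Fin p) (Fin p) ℝ) := by
      constructor
      · intro a b hab; simp [Matrix.one_apply, hab]
      · intro a; simp [Matrix.one_apply]
    have hLU : LowerUnitri L := by
      constructor
      · intro a; simp [hLdef]
      · intro a b hab
        simp only [hLdef]
        rw [if_neg hab.ne, if_neg]
        rintro (⟨rfl, rfl⟩ | ⟨rfl, rfl⟩)
        · exact absurd hab (not_lt.2 hij.le)
        · exact absurd hab (not_lt.2 (hij.trans hjk).le)
    have hmemL : memL G σ L := by
      constructor
      · intro a; simp [hLdef]
      · intro a b hab hcond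
        simp only [hLdef]
        rw [if_neg hab, if_neg]
        rintro (⟨rfl, rfl⟩ | ⟨rfl, rfl⟩)
        · rcases hcond with h | h
          · exact absurd h (not_lt.2 hij.le)
          · exact h hji
        · rcases hcond with h | h
          · exact absurd h (not_lt.2 (hij.trans hjk).le)
          · exact h hki
    have hmemP : memP G σ (L * (1 : Matrix (Fin p) (Fin p) ℝ) * Lᵀ) := (H 1 hD L hLU).mp hmemL
    have hzero : (L * (1 : Matrix (Fin p) (Fin p) ℝ) * Lᵀ) k j = 0 :=
      hmemP.2 k j (Ne.symm hjk') hkj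
    have hone : (L * (1 : Matrix (Fin p) (Fin p) ℝ) * Lᵀ) k j = 1 := by
      rw [Matrix.mul_one, Matrix.mul_apply]
      rw [Finset.sum_eq_single i]
      · rw [Matrix.transpose_apply]; simp [hLdef, Matrix.transpose_apply, hik.symm, (hij.trans hjk).ne', hij.ne']
      · intro m _ hmi
        rcases eq_or_ne m k with rfl | hmk
        · rw [Matrix.transpose_apply]; simp [hLdef, Matrix.transpose_apply, hjk', hmi]
        · simp [hLdef, Matrix.transpose_apply, hmi, Ne.symm hmk]
      · intro h; exact absurd (Finset.mem_univ i) h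
    rw [hzero] at hone
    exact one_ne_zero hone.symm
  refine ⟨?_, hpes⟩
  rintro ⟨n, f, hn4, hinj, hadj⟩
  have hn0 : 0 < n := by omega
  obtain ⟨i₀, -, hmin⟩ := Finset.exists_min_image (Finset.univ : Finset (Fin n))
    (fun x => σ (f x)) ⟨⟨0, hn0⟩, Finset.mem_univ _⟩
  have key : ∀ x y : ℕ, x < n → y < n →
      ((i₀ : ℕ) + x) % n = ((i₀ : ℕ) + y) % n → x = y := by
    intro x y hx hy h
    have h2 : x ≡ y [MOD n] := Nat.ModEq.add_left_cancel' (i₀ : ℕ) h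
    rwa [Nat.ModEq, Nat.mod_eq_of_lt hx, Nat.mod_eq_of_lt hy] at h2
  set a : Fin n := ⟨((i₀ : ℕ) + 1) % n, Nat.mod_lt _ hn0⟩ with ha
  set b : Fin n := ⟨((i₀ : ℕ) + (n - 1)) % n, Nat.mod_lt _ hn0⟩ with hb
  have hai : a ≠ i₀ := by
    intro h
    have hv : ((i₀ : ℕ) + 1) % n = (i₀ : ℕ) := congrArg Fin.val h
    have : ((i₀ : ℕ) + 1) % n = ((i₀ : ℕ) + 0) % n := by
      simpa [Nat.mod_eq_of_lt i₀.isLt] using hv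
    exact absurd (key 1 0 (by omega) hn0 this) (by omega)
  have hbi : b ≠ i₀ := by
    intro h
    have hv : ((i₀ : ℕ) + (n - 1)) % n = (i₀ : ℕ) := congrArg Fin.val h
    have : ((i₀ : ℕ) + (n - 1)) % n = ((i₀ : ℕ) + 0) % n := by
      simpa [Nat.mod_eq_of_lt i₀.isLt] using hv
    exact absurd (key (n - 1) 0 (by omega) hn0 this) (by omega)
  have hab : a ≠ b := by
    intro h
    have : ((i₀ : ℕ) + 1) % n = ((i₀ : ℕ) + (n - 1)) % n := congrArg Fin.val h
    exact absurd (key 1 (n - 1) (by omega) (by omega) this) (by omega)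
  have hadj_a : G.Adj (f i₀) (f a) := (hadj i₀ a).mpr (Or.inl rfl)
  have hadj_b : G.Adj (f i₀) (f b) := by
    refine (hadj i₀ b).mpr (Or.inr ?_)
    show ((b : ℕ) + 1) % n = (i₀ : ℕ)
    rw [hb]
    show (((i₀ : ℕ) + (n - 1)) % n + 1) % n = (i₀ : ℕ)
    rw [Nat.mod_add_mod]
    have : (i₀ : ℕ) + (n - 1) + 1 = (i₀ : ℕ) + n := by omega
    rw [this, Nat.add_mod_right, Nat.mod_eq_of_lt i₀.isLt]
  have hnadj : ¬ G.Adj (f a) (f b) := by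
    rw [hadj a b]
    rintro (h | h)
    · have : ((i₀ : ℕ) + 2) % n = ((i₀ : ℕ) + (n - 1)) % n := by
        have h' : (((i₀ : ℕ) + 1) % n + 1) % n = ((i₀ : ℕ) + (n - 1)) % n := h
        rwa [Nat.mod_add_mod] at h'
      exact absurd (key 2 (n - 1) (by omega) (by omega) this) (by omega)
    · have : ((i₀ : ℕ) + 0) % n = ((i₀ : ℕ) + 1) % n := by
        have h' : (((i₀ : ℕ) + (n - 1)) % n + 1) % n = ((i₀ : ℕ) + 1) % n := h
        rw [Nat.mod_add_mod] at h'
        have e : (i₀ : ℕ) + (n - 1) + 1 = (i₀ : ℕ) + 0 + n := by omega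
        rw [e, Nat.add_mod_right] at h'
        exact h'
      exact absurd (key 0 1 hn0 (by omega) this) (by omega)
  have hlt_a : σ (f i₀) < σ (f a) := by
    refine lt_of_le_of_ne (hmin a (Finset.mem_univ a)) ?_
    intro h
    exact hai (hinj (σ.injective h)).symm
  have hlt_b : σ (f i₀) < σ (f b) := by
    refine lt_of_le_of_ne (hmin b (Finset.mem_univ b)) ?_
    intro h
    exact hbi (hinj (σ.injective h)).symm
  have hne_ab : σ (f a) ≠ σ (f b) := fun h => hab (hinj (σ.injective h))
  rcases lt_or_gt_of_ne hne_ab with hlt | hlt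
  · have := hpes (σ (f i₀)) (σ (f a)) (σ (f b)) hlt_a hlt
      (by simpa using hadj_a.symm) (by simpa using hadj_b.symm)
    simp only [Equiv.symm_apply_apply] at this
    exact hnadj this.symm
  · have := hpes (σ (f i₀)) (σ (f b)) (σ (f a)) hlt_b hlt
      (by simpa using hadj_b.symm) (by simpa using hadj_a.symm)
    simp only [Equiv.symm_apply_apply] at this
    exact hnadj this
end

section
/- Let G = (V,E) be a connected homogeneous graph with |V| = m, and let σ be a Hasse tree based elimination scheme for G. Then the vertex σ⁻¹(m) (the vertex with the highest label) lies at the root of the Hasse tree of G; that is, for every vertex v ∈ V, N[v] ⊆ N[σ⁻¹(m)]. In particular, σ⁻¹(m) is adjacent to every other vertex of G. -/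
open Matrix BigOperators

/-- In a connected homogeneous graph with a Hasse tree based elimination scheme, the
vertex with the highest label lies at the root of the Hasse tree: its closed
neighborhood contains every closed neighborhood, and in particular it is adjacent
to every other vertex. -/
theorem statement5 {V : Type*} [Fintype V] {m : ℕ} (G : SimpleGraph V) (σ : V ≃ Fin m)
    (hconn : G.Connected) (hhom : Homogeneous G) (hσ : HasseElimScheme G σ)
    (u : V) (hu : ∀ v : V, σ v ≤ σ u) :
    (∀ v : V, cNbhd G v ⊆ cNbhd G u) ∧ ∀ v : V, v ≠ u → G.Adj u v := by
  have hmax : ∀ b : V, cNbhd G u ⊆ cNbhd G b → cNbhd G b ⊆ cNbhd G u := by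
    intro b hsub
    by_cases h : cNbhd G b = cNbhd G u
    · exact h.le
    · exact absurd (hσ b u hsub h) (not_lt.mpr (hu b))
  have step : ∀ a b : V, cNbhd G a ⊆ cNbhd G u → G.Adj a b → cNbhd G b ⊆ cNbhd G u := by
    intro a b ha hab
    rcases hhom a b hab with h | h
    · exact h.trans ha
    · have hau : a ∈ cNbhd G u := ha (Or.inl rfl)
      rcases hau with rfl | hau
      · exact hmax b h
      · have hub : u ∈ cNbhd G b := h (Or.inr hau.symm)
        rcases hub with rfl | hub
        · exact fun x hx => hx
        · rcases hhom u b hub with h' | h'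
          · exact h'
          · exact hmax b h'
    
  have walkstep : ∀ (a v : V), G.Walk a v → cNbhd G a ⊆ cNbhd G u → cNbhd G v ⊆ cNbhd G u := by
    intro a v w
    induction w with
    | nil => exact fun h => h
    | cons h p ih => exact fun ha => ih (step _ _ ha h)
  have key : ∀ v : V, cNbhd G v ⊆ cNbhd G u := by
    intro v
    obtain ⟨w⟩ := hconn.preconnected u v
    exact walkstep u v w (fun x hx => hx)
  refine ⟨key, fun v hv => ?_⟩
  have : v ∈ cNbhd G u := key v (Or.inl rfl)
  rcases this with rfl | h
  · exact absurd rfl hv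
  · exact h.symm
end

section
/- Let G = (V,E) be a homogeneous graph on p vertices, and let σ be an ordering of V which is a Hasse tree based elimination scheme for G. Then for any p×p real positive definite matrix Σ with modified Cholesky decomposition Σ = LDLᵀ, the following equivalences hold: Σ ∈ P_{G_σ} ⇔ L ∈ 𝓛_{G_σ} ⇔ L⁻¹ ∈ 𝓛_{G_σ}. -/
open Matrix BigOperators

section Aux
variable {V : Type*} {p : ℕ} {G : SimpleGraph V} {σ : V ≃ Fin p}

lemma key_sub (hhom : Homogeneous G) (hσ : HasseElimScheme G σ) {u v : V}
    (h : G.Adj u v) (hlt : σ v < σ u) : cNbhd G v ⊆ cNbhd G u := by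
  rcases hhom u v h with hs | hs
  · exact hs
  · by_cases heq : cNbhd G v = cNbhd G u
    · exact heq.le
    · exact absurd (hσ v u hs heq) (not_lt.2 hlt.le)

lemma trans1 (hhom : Homogeneous G) (hσ : HasseElimScheme G σ) {i j k : Fin p}
    (hji : j < i) (hkj : k < j)
    (h1 : G.Adj (σ.symm i) (σ.symm j)) (h2 : G.Adj (σ.symm j) (σ.symm k)) :
    G.Adj (σ.symm i) (σ.symm k) := by
  have hsub := key_sub hhom hσ h1 (by simpa using hji)
  have hmem : σ.symm k ∈ cNbhd G (σ.symm j) := Or.inr h2.symm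
  rcases hsub hmem with he | ha
  · exact absurd (σ.symm.injective he) (fun hh => by
      rw [hh] at hkj; exact absurd (hkj.trans hji) (lt_irrefl i))
  · exact ha.symm

lemma trans2 (hhom : Homogeneous G) (hσ : HasseElimScheme G σ) {i j k : Fin p}
    (hji : j < i) (hkj : k < j)
    (h1 : G.Adj (σ.symm i) (σ.symm k)) (h2 : G.Adj (σ.symm j) (σ.symm k)) :
    G.Adj (σ.symm i) (σ.symm j) := by
  have hsub := key_sub hhom hσ h1 (by simpa using hkj.trans hji)
  have hmem : σ.symm j ∈ cNbhd G (σ.symm k) := Or.inr h2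
  rcases hsub hmem with he | ha
  · exact absurd (σ.symm.injective he) (fun hh => by rw [hh] at hji; exact lt_irrefl i hji)
  · exact ha.symm

lemma entry_sum (L D : Matrix (Fin p) (Fin p) ℝ) (hD : ∀ i j : Fin p, i ≠ j → D i j = 0)
    (i j : Fin p) : (L * D * Lᵀ) i j = ∑ x, L i x * D x x * L j x := by
  have hd : D = Matrix.diagonal (fun k => D k k) := by
    ext a b
    by_cases h : a = b
    · subst h; simp
    · simp [Matrix.diagonal_apply_ne _ h, hD a b h]
  rw [hd, Matrix.mul_apply]
  refine Finset.sum_congr rfl fun k _ => ?_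
  rw [Matrix.mul_diagonal, Matrix.transpose_apply]
  simp

/-- memL-type zeros of `L` kill the off-pattern entries of `∑ L i x * D x x * L j x`. -/
lemma sum_zero_of_Lzeros (hhom : Homogeneous G) (hσ : HasseElimScheme G σ)
    (L D : Matrix (Fin p) (Fin p) ℝ)
    (hLz : ∀ i j : Fin p, i ≠ j → (i < j ∨ ¬ G.Adj (σ.symm i) (σ.symm j)) → L i j = 0)
    {i j : Fin p} (hji : j < i) (hadj : ¬ G.Adj (σ.symm i) (σ.symm j)) :
    ∑ x, L i x * D x x * L j x = 0 := by
  refine Finset.sum_eq_zero fun x _ => ?_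
  rcases lt_trichotomy x j with hx | rfl | hx
  · by_cases h1 : G.Adj (σ.symm i) (σ.symm x)
    · by_cases h2 : G.Adj (σ.symm j) (σ.symm x)
      · exact absurd (trans2 hhom hσ hji hx h1 h2) hadj
      · rw [hLz j x hx.ne' (Or.inr h2)]; ring
    · rw [hLz i x (hx.trans hji).ne' (Or.inr h1)]; ring
  · rw [hLz i x hji.ne' (Or.inr hadj)]; ring
  · rw [hLz j x hx.ne (Or.inl hx)]; ring

/-- Off-pattern zeros of `A = ∑ ...` force the Cholesky factor zeros. -/
lemma Azeros_to_Lzeros (hhom : Homogeneous G) (hσ : HasseElimScheme G σ)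
    (L D : Matrix (Fin p) (Fin p) ℝ)
    (hL1 : ∀ i, L i i = 1) (hLtri : ∀ i j : Fin p, i < j → L i j = 0)
    (hDpos : ∀ i, 0 < D i i)
    (hAz : ∀ i j : Fin p, i ≠ j → ¬ G.Adj (σ.symm i) (σ.symm j) →
      ∑ x, L i x * D x x * L j x = 0) :
    ∀ i j : Fin p, j < i → ¬ G.Adj (σ.symm i) (σ.symm j) → L i j = 0 := by
  suffices H : ∀ m : ℕ, ∀ j i : Fin p, (j : ℕ) = m → j < i →
      ¬ G.Adj (σ.symm i) (σ.symm j) → L i j = 0 by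
    exact fun i j h1 h2 => H j.val j i rfl h1 h2
  intro m
  induction m using Nat.strong_induction_on with
  | _ m ih =>
    intro j i hm hji hadj
    have hsum : ∑ x, L i x * D x x * L j x = 0 := hAz i j hji.ne' hadj
    have hsum2 : ∑ x, L i x * D x x * L j x = L i j * D j j := by
      rw [Finset.sum_eq_single j]
      · rw [hL1 j]; ring
      · intro x _ hxj
        rcases lt_or_gt_of_ne hxj with hx | hx
        · by_cases h1 : G.Adj (σ.symm i) (σ.symm x)
          · by_cases h2 : G.Adj (σ.symm j) (σ.symm x)
            · exact absurd (trans2 hhom hσ hji hx h1 h2) hadj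
            · rw [ih x.val (by rw [← hm]; exact hx) x j rfl hx h2]; ring
          · rw [ih x.val (by rw [← hm]; exact hx) x i rfl (hx.trans hji) h1]; ring
        · rw [hLtri j x hx]; ring
      · intro h; exact absurd (Finset.mem_univ j) h
    have := hsum2.symm.trans hsum
    rcases mul_eq_zero.mp this with h | h
    · exact h
    · exact absurd h (ne_of_gt (hDpos j))

end Aux

section Aux4
variable {V : Type*} {p : ℕ} {G : SimpleGraph V} {σ : V ≃ Fin p}

lemma inv_lowerUnitri (L : Matrix (Fin p) (Fin p) ℝ)
    (hL1 : ∀ i, L i i = 1) (hLtri : ∀ i j : Fin p, i < j → L i j = 0) :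
    (∀ i, L⁻¹ i i = 1) ∧ (∀ i j : Fin p, i < j → L⁻¹ i j = 0) ∧ L⁻¹ * L = 1 := by
  have hBT : L.BlockTriangular OrderDual.toDual := fun i j h => hLtri i j (by exact h)
  have hdet : L.det = 1 := by
    rw [Matrix.det_of_lowerTriangular L hBT]
    simp [hL1]
  have hunit : IsUnit L.det := by rw [hdet]; exact isUnit_one
  have hInv : Invertible L := L.invertibleOfIsUnitDet hunit
  have hBTinv := Matrix.blockTriangular_inv_of_blockTriangular hBT
  have htri : ∀ i j : Fin p, i < j → L⁻¹ i j = 0 := fun i j h => hBTinv (by exact h)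
  have hmul : L⁻¹ * L = 1 := Matrix.nonsing_inv_mul L hunit
  refine ⟨fun i => ?_, htri, hmul⟩
  have h1 : (L⁻¹ * L) i i = 1 := by rw [hmul]; simp
  rw [Matrix.mul_apply, Finset.sum_eq_single i] at h1
  · rw [hL1 i, mul_one] at h1; exact h1
  · intro x _ hxi
    rcases lt_or_gt_of_ne hxi with hx | hx
    · rw [hLtri x i hx]; ring
    · rw [htri i x hx]; ring
  · intro h; exact absurd (Finset.mem_univ i) h

lemma det_one_of_lowerUnitri (L : Matrix (Fin p) (Fin p) ℝ)
    (hL1 : ∀ i, L i i = 1) (hLtri : ∀ i j : Fin p, i < j → L i j = 0) :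
    IsUnit L.det := by
  have hBT : L.BlockTriangular OrderDual.toDual := fun i j h => hLtri i j (by exact h)
  have hdet : L.det = 1 := by
    rw [Matrix.det_of_lowerTriangular L hBT]; simp [hL1]
  rw [hdet]; exact isUnit_one

lemma inv_pattern (hhom : Homogeneous G) (hσ : HasseElimScheme G σ)
    (L : Matrix (Fin p) (Fin p) ℝ)
    (hL1 : ∀ i, L i i = 1) (hLtri : ∀ i j : Fin p, i < j → L i j = 0)
    (hLz : ∀ i j : Fin p, i ≠ j → (i < j ∨ ¬ G.Adj (σ.symm i) (σ.symm j)) → L i j = 0) :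
    ∀ i j : Fin p, j < i → ¬ G.Adj (σ.symm i) (σ.symm j) → L⁻¹ i j = 0 := by
  obtain ⟨hM1, hMtri, hmul⟩ := inv_lowerUnitri L hL1 hLtri
  suffices H : ∀ m : ℕ, ∀ i j : Fin p, (i : ℕ) - (j : ℕ) = m → j < i →
      ¬ G.Adj (σ.symm i) (σ.symm j) → L⁻¹ i j = 0 by
    exact fun i j h1 h2 => H _ i j rfl h1 h2
  intro m
  induction m using Nat.strong_induction_on with
  | _ m ih =>
    intro i j hm hji hadj
    have h0 : (L⁻¹ * L) i j = 0 := by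
      rw [hmul, Matrix.one_apply_ne hji.ne']
    rw [Matrix.mul_apply, Finset.sum_eq_single j] at h0
    · rw [hL1 j, mul_one] at h0; exact h0
    · intro x _ hxj
      rcases lt_or_gt_of_ne hxj with hx | hx
      · rw [hLtri x j hx]; ring
      · -- j < x
        rcases lt_trichotomy x i with hxi | rfl | hxi
        · by_cases h2 : G.Adj (σ.symm x) (σ.symm j)
          · by_cases h1 : G.Adj (σ.symm i) (σ.symm x)
            · exact absurd (trans1 hhom hσ hxi hx h1 h2) hadj
            · have hlt : (i : ℕ) - (x : ℕ) < m := by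
                have hx' : (j : ℕ) < (x : ℕ) := hx
                have hxi' : (x : ℕ) < (i : ℕ) := hxi
                omega
              rw [ih _ hlt i x rfl hxi h1]; ring
          · rw [hLz x j hx.ne' (Or.inr h2)]; ring
        · rw [hLz x j hji.ne' (Or.inr hadj), mul_zero]
        · rw [hMtri i x hxi]; ring
    · intro h; exact absurd (Finset.mem_univ j) h

end Aux4

/-- Khare–Rajaratnam: for a homogeneous graph with a Hasse tree based elimination
scheme, zeros are preserved between `Σ`, its Cholesky factor `L`, and `L⁻¹`. -/
theorem statement6 {V : Type*} [Fintype V] {p : ℕ} (G : SimpleGraph V) (σ : V ≃ Fin p)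
    (hhom : Homogeneous G) (hσ : HasseElimScheme G σ)
    (A L D : Matrix (Fin p) (Fin p) ℝ) (hA : A.PosDef)
    (hL : LowerUnitri L) (hD : PosDiag D) (hdec : A = L * D * Lᵀ) :
    (memP G σ A ↔ memL G σ L) ∧ (memL G σ L ↔ memL G σ L⁻¹) := by
  have hAentry : ∀ i j : Fin p, A i j = ∑ x, L i x * D x x * L j x := fun i j => by
    rw [hdec]; exact entry_sum L D hD.1 i j
  constructor
  · constructor
    · rintro ⟨_, hAz⟩
      refine ⟨hL.1, fun i j hne hor => ?_⟩
      rcases hor with hij | hadj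
      · exact hL.2 i j hij
      · rcases lt_or_gt_of_ne hne with h | h
        · exact hL.2 i j h
        · exact Azeros_to_Lzeros hhom hσ L D hL.1 hL.2 hD.2
            (fun a b hne' hadj' => by rw [← hAentry]; exact hAz a b hne' hadj') i j h hadj
    · rintro ⟨_, hLz⟩
      refine ⟨hA, fun i j hne hadj => ?_⟩
      rw [hAentry]
      rcases lt_or_gt_of_ne hne with h | h
      · have hz := sum_zero_of_Lzeros hhom hσ L D hLz h (fun ha => hadj ha.symm)
        rw [← hz]
        exact Finset.sum_congr rfl fun x _ => by ring
      · exact sum_zero_of_Lzeros hhom hσ L D hLz h hadj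
  · obtain ⟨hM1, hMtri, hmul⟩ := inv_lowerUnitri L hL.1 hL.2
    constructor
    · rintro ⟨_, hLz⟩
      refine ⟨hM1, fun i j hne hor => ?_⟩
      rcases hor with hij | hadj
      · exact hMtri i j hij
      · rcases lt_or_gt_of_ne hne with h | h
        · exact hMtri i j h
        · exact inv_pattern hhom hσ L hL.1 hL.2 hLz i j h hadj
    · rintro ⟨hM1', hMz⟩
      have hunit := det_one_of_lowerUnitri L hL.1 hL.2
      have hLL : (L⁻¹)⁻¹ = L := Matrix.nonsing_inv_nonsing_inv L hunit
      refine ⟨hL.1, fun i j hne hor => ?_⟩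
      rcases hor with hij | hadj
      · exact hL.2 i j hij
      · rcases lt_or_gt_of_ne hne with h | h
        · exact hL.2 i j h
        · rw [← hLL]
          exact inv_pattern hhom hσ L⁻¹ hM1 hMtri hMz i j h hadj
end

section
/- Let G = (V,E) be a finite simple graph on p vertices, σ an ordering of V. Suppose that for every p×p diagonal matrix D with positive diagonal entries and every p×p lower triangular matrix L with unit diagonal, the following equivalences hold: L ∈ 𝓛_{G_σ} ⇔ L⁻¹ ∈ 𝓛_{G_σ} ⇔ LDLᵀ ∈ P_{G_σ}. Then G is a homogeneous graph and σ is a Hasse tree based elimination scheme for G. -/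
open Matrix BigOperators

lemma posDiag_one {p : ℕ} : PosDiag (1 : Matrix (Fin p) (Fin p) ℝ) :=
  ⟨fun _ _ h => Matrix.one_apply_ne h, fun i => by simp⟩

section
variable {V : Type*} {p : ℕ} (G : SimpleGraph V) (σ : V ≃ Fin p)

lemma aux_Q1
    (H : ∀ D : Matrix (Fin p) (Fin p) ℝ, PosDiag D →
      ∀ L : Matrix (Fin p) (Fin p) ℝ, LowerUnitri L →
        ((memL G σ L ↔ memL G σ L⁻¹) ∧ (memL G σ L ↔ memP G σ (L * D * Lᵀ))))
    {i j k : Fin p} (hij : i < j) (hjk : j < k)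
    (hji : G.Adj (σ.symm j) (σ.symm i)) (hki : G.Adj (σ.symm k) (σ.symm i)) :
    G.Adj (σ.symm k) (σ.symm j) := by
  by_contra hkj
  have hik : i < k := hij.trans hjk
  set L : Matrix (Fin p) (Fin p) ℝ :=
    1 + single j i (1:ℝ) + single k i (1:ℝ) with hL
  have hLapp : ∀ a b : Fin p, L a b =
      (if a = b then (1:ℝ) else 0) + (if j = a ∧ i = b then 1 else 0)
        + (if k = a ∧ i = b then 1 else 0) := by
    intro a b
    simp [hL, Matrix.add_apply, Matrix.one_apply, Matrix.single]
  have hdiag : ∀ a, L a a = 1 := by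
    intro a
    have e1 : ¬(j = a ∧ i = a) := by
      rintro ⟨rfl, rfl⟩; exact absurd hij (lt_irrefl _)
    have e2 : ¬(k = a ∧ i = a) := by
      rintro ⟨rfl, rfl⟩; exact absurd hik (lt_irrefl _)
    rw [hLapp, if_pos rfl, if_neg e1, if_neg e2]; ring
  have hLU : LowerUnitri L := by
    refine ⟨hdiag, fun a b hab => ?_⟩
    have e1 : ¬(j = a ∧ i = b) := by
      rintro ⟨rfl, rfl⟩; exact absurd (hij.trans hab) (lt_irrefl _)
    have e2 : ¬(k = a ∧ i = b) := by
      rintro ⟨rfl, rfl⟩; exact absurd (hik.trans hab) (lt_irrefl _)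
    rw [hLapp, if_neg hab.ne, if_neg e1, if_neg e2]; ring
  have hmemL : memL G σ L := by
    refine ⟨hdiag, fun a b hab hc => ?_⟩
    have e1 : ¬(j = a ∧ i = b) := by
      rintro ⟨rfl, rfl⟩
      rcases hc with h | h
      · exact absurd (hij.trans h) (lt_irrefl _)
      · exact h hji
    have e2 : ¬(k = a ∧ i = b) := by
      rintro ⟨rfl, rfl⟩
      rcases hc with h | h
      · exact absurd (hik.trans h) (lt_irrefl _)
      · exact h hki
    rw [hLapp, if_neg hab, if_neg e1, if_neg e2]; ring
  have hP : memP G σ (L * 1 * Lᵀ) := ((H 1 posDiag_one L hLU).2).mp hmemL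
  have hzero := hP.2 k j hjk.ne' hkj
  have hki1 : L k i = 1 := by
    have e1 : ¬(j = k ∧ i = i) := fun h => hjk.ne h.1
    rw [hLapp, if_neg hik.ne', if_neg e1, if_pos ⟨rfl, rfl⟩]; ring
  have hji1 : L j i = 1 := by
    have e2 : ¬(k = j ∧ i = i) := fun h => hjk.ne' h.1
    rw [hLapp, if_neg hij.ne', if_pos ⟨rfl, rfl⟩, if_neg e2]; ring
  have hone : (L * (1 : Matrix (Fin p) (Fin p) ℝ) * Lᵀ) k j = 1 := by
    rw [mul_one, Matrix.mul_apply]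
    rw [Finset.sum_eq_single i]
    · rw [Matrix.transpose_apply, hki1, hji1]; norm_num
    · intro b _ hb
      rw [Matrix.transpose_apply]
      rcases eq_or_ne b k with rfl | hbk
      · rw [hLU.2 j b hjk, mul_zero]
      · have hkb : L k b = 0 := by
          have e1 : ¬(j = k ∧ i = b) := fun h => hjk.ne h.1
          have e2 : ¬(k = k ∧ i = b) := fun h => hb h.2.symm
          rw [hLapp, if_neg (Ne.symm hbk), if_neg e1, if_neg e2]; ring
        rw [hkb, zero_mul]
    · intro h; exact absurd (Finset.mem_univ i) h
  exact one_ne_zero (hone.symm.trans hzero)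

lemma aux_Q2
    (H : ∀ D : Matrix (Fin p) (Fin p) ℝ, PosDiag D →
      ∀ L : Matrix (Fin p) (Fin p) ℝ, LowerUnitri L →
        ((memL G σ L ↔ memL G σ L⁻¹) ∧ (memL G σ L ↔ memP G σ (L * D * Lᵀ))))
    {i j k : Fin p} (hij : i < j) (hjk : j < k)
    (hji : G.Adj (σ.symm j) (σ.symm i)) (hkj : G.Adj (σ.symm k) (σ.symm j)) :
    G.Adj (σ.symm k) (σ.symm i) := by
  by_contra hki
  have hik : i < k := hij.trans hjk
  set A : Matrix (Fin p) (Fin p) ℝ := single j i (1:ℝ) with hA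
  set B : Matrix (Fin p) (Fin p) ℝ := single k j (1:ℝ) with hB
  set C : Matrix (Fin p) (Fin p) ℝ := single k i (1:ℝ) with hC
  set L : Matrix (Fin p) (Fin p) ℝ := 1 + A + B with hL
  set M : Matrix (Fin p) (Fin p) ℝ := 1 - A - B + C with hM
  have hLapp : ∀ a b : Fin p, L a b =
      (if a = b then (1:ℝ) else 0) + (if j = a ∧ i = b then 1 else 0)
        + (if k = a ∧ j = b then 1 else 0) := by
    intro a b
    simp [hL, hA, hB, Matrix.add_apply, Matrix.one_apply, Matrix.single]
  have hLM : L * M = 1 := by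
    have hAA : A * A = 0 := by
      rw [hA]; exact Matrix.single_mul_single_of_ne (h := hij.ne) ..
    have hAB : A * B = 0 := by
      rw [hA, hB]; exact Matrix.single_mul_single_of_ne (h := hik.ne) ..
    have hAC : A * C = 0 := by
      rw [hA, hC]; exact Matrix.single_mul_single_of_ne (h := hik.ne) ..
    have hBA : B * A = C := by
      rw [hA, hB, hC, Matrix.single_mul_single_same, mul_one]
    have hBB : B * B = 0 := by
      rw [hB]; exact Matrix.single_mul_single_of_ne (h := hjk.ne) ..
    have hBC : B * C = 0 := by
      rw [hB, hC]; exact Matrix.single_mul_single_of_ne (h := hjk.ne) ..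
    rw [hL, hM]
    simp only [mul_add, add_mul, mul_sub, sub_mul, one_mul, mul_one,
      hAA, hAB, hAC, hBA, hBB, hBC]
    abel
  have hdiag : ∀ a, L a a = 1 := by
    intro a
    have e1 : ¬(j = a ∧ i = a) := by
      rintro ⟨rfl, rfl⟩; exact absurd hij (lt_irrefl _)
    have e2 : ¬(k = a ∧ j = a) := by
      rintro ⟨rfl, rfl⟩; exact absurd hjk (lt_irrefl _)
    rw [hLapp, if_pos rfl, if_neg e1, if_neg e2]; ring
  have hLU : LowerUnitri L := by
    refine ⟨hdiag, fun a b hab => ?_⟩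
    have e1 : ¬(j = a ∧ i = b) := by
      rintro ⟨rfl, rfl⟩; exact absurd (hij.trans hab) (lt_irrefl _)
    have e2 : ¬(k = a ∧ j = b) := by
      rintro ⟨rfl, rfl⟩; exact absurd (hjk.trans hab) (lt_irrefl _)
    rw [hLapp, if_neg hab.ne, if_neg e1, if_neg e2]; ring
  have hmemL : memL G σ L := by
    refine ⟨hdiag, fun a b hab hc => ?_⟩
    have e1 : ¬(j = a ∧ i = b) := by
      rintro ⟨rfl, rfl⟩
      rcases hc with h | h
      · exact absurd (hij.trans h) (lt_irrefl _)
      · exact h hji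
    have e2 : ¬(k = a ∧ j = b) := by
      rintro ⟨rfl, rfl⟩
      rcases hc with h | h
      · exact absurd (hjk.trans h) (lt_irrefl _)
      · exact h hkj
    rw [hLapp, if_neg hab, if_neg e1, if_neg e2]; ring
  have hinv : L⁻¹ = M := Matrix.inv_eq_right_inv hLM
  have hmemLi : memL G σ L⁻¹ := ((H 1 posDiag_one L hLU).1).mp hmemL
  rw [hinv] at hmemLi
  have hzero : M k i = 0 := hmemLi.2 k i hik.ne' (Or.inr hki)
  have hone : M k i = 1 := by
    have h1 : (1 : Matrix (Fin p) (Fin p) ℝ) k i = 0 := Matrix.one_apply_ne hik.ne'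
    have h2 : A k i = 0 := by
      rw [hA]; exact Matrix.single_apply_of_row_ne hjk.ne _ _ _
    have h3 : B k i = 0 := by
      rw [hB]; exact Matrix.single_apply_of_col_ne _ _ hij.ne' _
    have h4 : C k i = 1 := by rw [hC]; exact Matrix.single_apply_same _ _ _
    rw [hM, Matrix.add_apply, Matrix.sub_apply, Matrix.sub_apply, h1, h2, h3, h4]
    ring
  exact one_ne_zero (hone.symm.trans hzero)

lemma key_incl
    (H : ∀ D : Matrix (Fin p) (Fin p) ℝ, PosDiag D →
      ∀ L : Matrix (Fin p) (Fin p) ℝ, LowerUnitri L →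
        ((memL G σ L ↔ memL G σ L⁻¹) ∧ (memL G σ L ↔ memP G σ (L * D * Lᵀ))))
    {v v' : V} (hadj : G.Adj v v') (hlt : σ v < σ v') :
    cNbhd G v ⊆ cNbhd G v' := by
  intro a ha
  rcases ha with rfl | ha
  · exact Or.inr hadj
  · rcases eq_or_ne a v' with rfl | hav'
    · exact Or.inl rfl
    have hav : a ≠ v := G.ne_of_adj ha
    have h1 : σ a ≠ σ v := fun h => hav (σ.injective h)
    have h2 : σ a ≠ σ v' := fun h => hav' (σ.injective h)
    rcases lt_trichotomy (σ a) (σ v) with h | h | h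
    · have := aux_Q2 G σ H h hlt (by simpa using ha.symm) (by simpa using hadj.symm)
      exact Or.inr (by simpa using this.symm)
    · exact absurd h h1
    · rcases lt_trichotomy (σ a) (σ v') with h' | h' | h'
      · have := aux_Q1 G σ H h h' (by simpa using ha) (by simpa using hadj.symm)
        exact Or.inr (by simpa using this.symm)
      · exact absurd h' h2
      · have := aux_Q1 G σ H hlt h' (by simpa using hadj.symm) (by simpa using ha)
        exact Or.inr (by simpa using this)

end

/-- Converse: if for all positive diagonal `D` and unit lower triangular `L` the
equivalences `L ∈ 𝓛_{G_σ} ⇔ L⁻¹ ∈ 𝓛_{G_σ} ⇔ LDLᵀ ∈ P_{G_σ}` hold, then `G` is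
homogeneous and `σ` is a Hasse tree based elimination scheme. -/
theorem statement7 {V : Type*} [Fintype V] {p : ℕ} (G : SimpleGraph V) (σ : V ≃ Fin p)
    (H : ∀ D : Matrix (Fin p) (Fin p) ℝ, PosDiag D →
      ∀ L : Matrix (Fin p) (Fin p) ℝ, LowerUnitri L →
        ((memL G σ L ↔ memL G σ L⁻¹) ∧ (memL G σ L ↔ memP G σ (L * D * Lᵀ)))) :
    Homogeneous G ∧ HasseElimScheme G σ := by
  constructor
  · intro v v' hadj
    rcases lt_trichotomy (σ v) (σ v') with h | h | h
    · exact Or.inr (key_incl G σ H hadj h)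
    · exact absurd (σ.injective h) (G.ne_of_adj hadj)
    · exact Or.inl (key_incl G σ H hadj.symm h)
  · intro u v hsub hne
    rcases lt_trichotomy (σ v) (σ u) with h | h | h
    · exact h
    · exact absurd (congrArg (cNbhd G) (σ.injective h)) (Ne.symm hne)
    · exfalso
      have hvmem : v ∈ cNbhd G u := hsub (Or.inl rfl)
      rcases hvmem with rfl | hadj
      · exact hne rfl
      · exact hne (le_antisymm (key_incl G σ H hadj.symm h) hsub)
end

section
/- Let G = (V,E) be a cycle on 4 vertices or a path on 4 vertices, and let σ be any ordering (bijection onto {1,2,3,4}) of V. Then there exist vertices u,v,w ∈ V such that (u,v) ∈ E, (v,w) ∈ E, (u,w) ∉ E, and either σ(v) < σ(u) < σ(w) or σ(u) < σ(v) < σ(w). -/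
open Matrix BigOperators

/-- `G` is a cycle graph on its `4` vertices. -/
def IsCycle4 {V : Type*} (G : SimpleGraph V) : Prop :=
  ∃ a b c d : V, a ≠ b ∧ a ≠ c ∧ a ≠ d ∧ b ≠ c ∧ b ≠ d ∧ c ≠ d ∧
    (∀ v : V, v = a ∨ v = b ∨ v = c ∨ v = d) ∧
    G.Adj a b ∧ G.Adj b c ∧ G.Adj c d ∧ G.Adj d a ∧ ¬ G.Adj a c ∧ ¬ G.Adj b d

/-- `G` is a path graph on its `4` vertices. -/
def IsPath4 {V : Type*} (G : SimpleGraph V) : Prop :=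
  ∃ a b c d : V, a ≠ b ∧ a ≠ c ∧ a ≠ d ∧ b ≠ c ∧ b ≠ d ∧ c ≠ d ∧
    (∀ v : V, v = a ∨ v = b ∨ v = c ∨ v = d) ∧
    G.Adj a b ∧ G.Adj b c ∧ G.Adj c d ∧ ¬ G.Adj a c ∧ ¬ G.Adj a d ∧ ¬ G.Adj b d

lemma key9 {V : Type*} (G : SimpleGraph V) (σ : V ≃ Fin 4) {a b c d : V}
    (hac : a ≠ c) (hbd : b ≠ d)
    (hab : G.Adj a b) (hbc : G.Adj b c) (hcd : G.Adj c d)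
    (hnac : ¬ G.Adj a c) (hnbd : ¬ G.Adj b d) :
    ∃ u v w : V, G.Adj u v ∧ G.Adj v w ∧ ¬ G.Adj u w ∧
      ((σ v < σ u ∧ σ u < σ w) ∨ (σ u < σ v ∧ σ v < σ w)) := by
  have hab' : σ a ≠ σ b := fun h => G.ne_of_adj hab (σ.injective h)
  have hbc' : σ b ≠ σ c := fun h => G.ne_of_adj hbc (σ.injective h)
  have hcd' : σ c ≠ σ d := fun h => G.ne_of_adj hcd (σ.injective h)
  have hac' : σ a ≠ σ c := fun h => hac (σ.injective h)
  have hbd' : σ b ≠ σ d := fun h => hbd (σ.injective h)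
  rcases hbc'.lt_or_gt with hbc2 | hcb2
  · rcases hab'.lt_or_gt with h1 | h1
    · exact ⟨a, b, c, hab, hbc, hnac, Or.inr ⟨h1, hbc2⟩⟩
    · rcases hac'.lt_or_gt with h2 | h2
      · exact ⟨a, b, c, hab, hbc, hnac, Or.inl ⟨h1, h2⟩⟩
      · exact ⟨c, b, a, hbc.symm, hab.symm, fun h => hnac h.symm,
          Or.inl ⟨hbc2, h2⟩⟩
  · rcases hcd'.lt_or_gt with h1 | h1
    · rcases hbd'.lt_or_gt with h2 | h2
      · exact ⟨b, c, d, hbc, hcd, hnbd, Or.inl ⟨hcb2, h2⟩⟩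
      · exact ⟨d, c, b, hcd.symm, hbc.symm, fun h => hnbd h.symm,
          Or.inl ⟨h1, h2⟩⟩
    · exact ⟨d, c, b, hcd.symm, hbc.symm, fun h => hnbd h.symm,
        Or.inr ⟨h1, hcb2⟩⟩

/-- Lemma 4 of the paper: in a `4`-cycle or `4`-path, for any ordering `σ` there are
vertices `u, v, w` with `(u,v), (v,w) ∈ E`, `(u,w) ∉ E`, and
`σ(v) < σ(u) < σ(w)` or `σ(u) < σ(v) < σ(w)`. -/
theorem statement9 {V : Type*} (G : SimpleGraph V) (σ : V ≃ Fin 4)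
    (hG : IsCycle4 G ∨ IsPath4 G) :
    ∃ u v w : V, G.Adj u v ∧ G.Adj v w ∧ ¬ G.Adj u w ∧
      ((σ v < σ u ∧ σ u < σ w) ∨ (σ u < σ v ∧ σ v < σ w)) := by
  rcases hG with ⟨a, b, c, d, _, hac, _, _, hbd, _, _, hab, hbc, hcd, _, hnac, hnbd⟩ |
    ⟨a, b, c, d, _, hac, _, _, hbd, _, _, hab, hbc, hcd, hnac, _, hnbd⟩ <;>
  exact key9 G σ hac hbd hab hbc hcd hnac hnbd
end

section
/- Let G = (V,E) be a finite simple graph on p vertices and σ an ordering of V. If either G is not a homogeneous graph, or G is a homogeneous graph but σ is not a Hasse tree based elimination scheme for G, then there exists a maximal clique C of G and a matrix Σ ∈ P_{G_σ}, with modified Cholesky decomposition Σ = LDLᵀ, such that det((Σ⁻¹)_{σ(C)}) ≠ ∏_{i ∈ σ(C)} 1/D_{ii}, where (Σ⁻¹)_{σ(C)} denotes the principal submatrix of Σ⁻¹ with rows and columns indexed by σ(C). -/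
open Matrix BigOperators

section Aux

/-- Every clique extends to a maximal clique. -/
lemma exists_maxClique_superset {V : Type*} [Fintype V] [DecidableEq V] (G : SimpleGraph V)
    (s : Finset V) (hs : G.IsClique (s : Set V)) :
    ∃ C : Finset V, s ⊆ C ∧ G.IsClique (C : Set V) ∧
      ∀ C' : Finset V, G.IsClique (C' : Set V) → C ⊆ C' → C = C' := by
  classical
  set 𝒞 : Finset (Finset V) :=
    Finset.univ.filter (fun t => G.IsClique (t : Set V) ∧ s ⊆ t) with h𝒞
  have hmem : s ∈ 𝒞 := by simp [h𝒞, hs]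
  obtain ⟨C, hC, hmax⟩ := 𝒞.exists_max_image (fun t => t.card) ⟨s, hmem⟩
  simp only [h𝒞, Finset.mem_filter, Finset.mem_univ, true_and] at hC hmax
  refine ⟨C, hC.2, hC.1, fun C' hC' hsub => ?_⟩
  exact Finset.eq_of_subset_of_card_le hsub (hmax C' ⟨hC', hC.2.trans hsub⟩)

lemma dotProduct_self_pos' {n : Type*} [Fintype n] {v : n → ℝ} (hv : v ≠ 0) :
    0 < dotProduct v v := by
  rcases lt_or_eq_of_le (Finset.sum_nonneg fun i _ => mul_self_nonneg (v i)) with h | h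
  · exact h
  · exact absurd (dotProduct_self_eq_zero.mp h.symm) hv

/-- Extraction of the witness triple. -/
lemma extract_triple {V : Type*} [Fintype V] {p : ℕ} (G : SimpleGraph V) (σ : V ≃ Fin p)
    (h : ¬ (Homogeneous G ∧ HasseElimScheme G σ)) :
    ∃ u v w : V, G.Adj u v ∧ G.Adj w u ∧ ¬ G.Adj w v ∧ w ≠ v ∧ σ u < σ v := by
  by_cases hhom : Homogeneous G
  · -- σ is not a Hasse elimination scheme
    have hhasse : ¬ HasseElimScheme G σ := fun hh => h ⟨hhom, hh⟩
    simp only [HasseElimScheme, not_forall] at hhasse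
    obtain ⟨u, v, hsub, hne, hlt⟩ := hhasse
    have huv : u ≠ v := fun e => hne (by rw [e])
    have hvNu : v ∈ cNbhd G u := hsub (Or.inl rfl)
    have hadj : G.Adj u v := by
      rcases hvNu with e | a
      · exact absurd e.symm huv
      · exact a.symm
    have hss : cNbhd G v ⊂ cNbhd G u := hsub.ssubset_of_ne (Ne.symm hne)
    obtain ⟨w, hwu, hwv⟩ := Set.exists_of_ssubset hss
    have hwv' : w ≠ v ∧ ¬ G.Adj w v := by
      constructor
      · exact fun e => hwv (Or.inl e)
      · exact fun a => hwv (Or.inr a)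
    have hwne : w ≠ u := by
      rintro rfl
      exact hwv (Or.inr hadj)
    have hwadj : G.Adj w u := by
      rcases hwu with e | a
      · exact absurd e hwne
      · exact a
    refine ⟨u, v, w, hadj, hwadj, hwv'.2, hwv'.1, ?_⟩
    rcases lt_trichotomy (σ u) (σ v) with h1 | h1 | h1
    · exact h1
    · exact absurd (σ.injective h1) huv
    · exact absurd h1 hlt
  · -- G is not homogeneous
    simp only [Homogeneous, not_forall, not_or] at hhom
    obtain ⟨x, y, hxy, hny, hnx⟩ := hhom
    rw [Set.not_subset] at hny hnx
    obtain ⟨b, hbNy, hbNx⟩ := hny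
    obtain ⟨a, haNx, haNy⟩ := hnx
    -- a ~ x, ¬ a ~ y, a ≠ y ; b ~ y, ¬ b ~ x, b ≠ x
    have hax : G.Adj a x := by
      rcases haNx with e | h' 
      · subst e; exact absurd (Or.inl rfl : a ∈ cNbhd G a) (by
          rintro -
          exact haNy (Or.inr hxy))
      · exact h'
    have hanv : a ≠ y ∧ ¬ G.Adj a y := ⟨fun e => haNy (Or.inl e), fun h' => haNy (Or.inr h')⟩
    have hby : G.Adj b y := by
      rcases hbNy with e | h'
      · subst e; exact absurd (Or.inr hxy.symm : b ∈ cNbhd G x) hbNx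
      · exact h'
    have hbnv : b ≠ x ∧ ¬ G.Adj b x := ⟨fun e => hbNx (Or.inl e), fun h' => hbNx (Or.inr h')⟩
    rcases lt_trichotomy (σ x) (σ y) with h1 | h1 | h1
    · exact ⟨x, y, a, hxy, hax, hanv.2, hanv.1, h1⟩
    · exact absurd (σ.injective h1) hxy.ne
    · exact ⟨y, x, b, hxy.symm, hby, hbnv.2, hbnv.1, h1⟩

end Aux

/-- Converse of the determinant characterization: if `G` is not homogeneous, or `σ`
is not a Hasse tree based elimination scheme, then there is a maximal clique `C` and
`Σ ∈ P_{G_σ}` with Cholesky decomposition `Σ = LDLᵀ` for which the clique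
determinant identity fails. -/
theorem statement10 {V : Type*} [Fintype V] {p : ℕ} (G : SimpleGraph V) (σ : V ≃ Fin p)
    (h : ¬ (Homogeneous G ∧ HasseElimScheme G σ)) :
    ∃ (C : Finset V) (A L D : Matrix (Fin p) (Fin p) ℝ),
      IsMaxClique G C ∧ memP G σ A ∧ LowerUnitri L ∧ PosDiag D ∧
      A = L * D * Lᵀ ∧
      principalDet A⁻¹ (C.image (fun v => σ v)) ≠
        ∏ i ∈ C.image (fun v => σ v), 1 / D i i := by
  classical
  obtain ⟨u, v, w, hadj, hwu, hwv, hwvne, hlt⟩ := extract_triple G σ h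
  -- a maximal clique containing u and w
  have hclq : G.IsClique (({u, w} : Finset V) : Set V) := by
    rw [Finset.coe_insert, Finset.coe_singleton]
    exact SimpleGraph.isClique_pair.mpr fun _ => hwu.symm
  obtain ⟨C, hsubC, hCclq, hCmax⟩ := exists_maxClique_superset G {u, w} hclq
  have huC : u ∈ C := hsubC (by simp)
  have hwC : w ∈ C := hsubC (by simp)
  have hvC : v ∉ C := fun hv =>
    hwv (hCclq (by simpa using hwC) (by simpa using hv) hwvne)
  -- indices
  set i₀ : Fin p := σ u with hi₀
  set j₀ : Fin p := σ v with hj₀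
  have hij : i₀ < j₀ := hlt
  have hijne : i₀ ≠ j₀ := ne_of_lt hij
  have hsu : σ.symm i₀ = u := by rw [hi₀, Equiv.symm_apply_apply]
  have hsv : σ.symm j₀ = v := by rw [hj₀, Equiv.symm_apply_apply]
  -- matrices
  set E : Matrix (Fin p) (Fin p) ℝ := Matrix.single j₀ i₀ 1 with hE
  have hET : Eᵀ = Matrix.single i₀ j₀ 1 := by
    ext a b
    rw [Matrix.transpose_apply, hE]
    simp [Matrix.single, and_comm]
  have hEE : E * E = 0 := by
    rw [hE]; exact Matrix.single_mul_single_of_ne _ _ _ _ hijne 1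
  have hETET : Eᵀ * Eᵀ = 0 := by
    rw [hET]; exact Matrix.single_mul_single_of_ne _ _ _ _ hijne.symm 1
  set L : Matrix (Fin p) (Fin p) ℝ := 1 + E with hL
  have hLT : Lᵀ = 1 + Eᵀ := by rw [hL, Matrix.transpose_add, Matrix.transpose_one]
  set A : Matrix (Fin p) (Fin p) ℝ := L * Lᵀ with hA
  have hAeq : A = 1 + E + Eᵀ + Matrix.single j₀ j₀ 1 := by
    have hexp : (1 + E) * (1 + Eᵀ) = 1 + E + Eᵀ + E * Eᵀ := by noncomm_ring
    have hmul : E * Eᵀ = Matrix.single j₀ j₀ 1 := by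
      rw [hET, hE, Matrix.single_mul_single_same, mul_one]
    rw [hA, hLT, hL, hexp, hmul]
  -- the inverse of A
  set B : Matrix (Fin p) (Fin p) ℝ := (1 - Eᵀ) * (1 - E) with hB
  have h1 : Lᵀ * (1 - Eᵀ) = 1 := by
    have : (1 + Eᵀ) * (1 - Eᵀ) = 1 - Eᵀ * Eᵀ := by noncomm_ring
    rw [hLT, this, hETET, sub_zero]
  have h2 : L * (1 - E) = 1 := by
    have : (1 + E) * (1 - E) = 1 - E * E := by noncomm_ring
    rw [hL, this, hEE, sub_zero]
  have h2' : (1 - Eᵀ) * Lᵀ = 1 := by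
    have := congrArg Matrix.transpose h2
    rwa [Matrix.transpose_mul, Matrix.transpose_sub, Matrix.transpose_one] at this
  have hABone : A * B = 1 := by
    rw [hA, hB, mul_assoc, ← mul_assoc Lᵀ, h1, one_mul, h2]
  have hAinv : A⁻¹ = B := Matrix.inv_eq_right_inv hABone
  have hBeq : B = 1 - E - Eᵀ + Matrix.single i₀ i₀ 1 := by
    have hexp : (1 - Eᵀ) * (1 - E) = 1 - E - Eᵀ + Eᵀ * E := by noncomm_ring
    have hmul : Eᵀ * E = Matrix.single i₀ i₀ 1 := by
      rw [hET, hE, Matrix.single_mul_single_same, mul_one]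
    rw [hB, hexp, hmul]
  -- positive definiteness
  have hApos : A.PosDef := by
    refine Matrix.PosDef.of_dotProduct_mulVec_pos ?_ ?_
    · show Aᴴ = A
      have : Aᴴ = Aᵀ := by
        ext a b; simp [Matrix.conjTranspose_apply]
      rw [this, hA, Matrix.transpose_mul, Matrix.transpose_transpose]
    · intro x hx
      have hy : Lᵀ *ᵥ x ≠ 0 := by
        intro hy0
        apply hx
        have : ((1 - Eᵀ) * Lᵀ) *ᵥ x = (1 - Eᵀ) *ᵥ (Lᵀ *ᵥ x) := (Matrix.mulVec_mulVec _ _ _).symm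
        rw [h2', hy0, Matrix.mulVec_zero, Matrix.one_mulVec] at this
        exact this
      have key : dotProduct (star x) (A *ᵥ x) = dotProduct (Lᵀ *ᵥ x) (Lᵀ *ᵥ x) := by
        rw [star_trivial, hA, ← Matrix.mulVec_mulVec, Matrix.dotProduct_mulVec,
          ← Matrix.mulVec_transpose]
      rw [key]
      exact dotProduct_self_pos' hy
  -- index sets
  have hi₀S : i₀ ∈ C.image (fun x => σ x) := Finset.mem_image.mpr ⟨u, huC, rfl⟩
  have hj₀S : j₀ ∉ C.image (fun x => σ x) := by
    intro hmem
    obtain ⟨x, hx, he⟩ := Finset.mem_image.mp hmem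
    have : x = v := σ.injective (by rw [he, hj₀])
    exact hvC (this ▸ hx)
  refine ⟨C, A, L, 1, ⟨hCclq, hCmax⟩, ⟨hApos, ?_⟩, ⟨?_, ?_⟩, ⟨?_, ?_⟩, ?_, ?_⟩
  · -- zero pattern of A
    intro i j hne hnadj
    rw [hAeq]
    simp only [Matrix.add_apply, Matrix.one_apply_ne hne]
    have e1 : E i j = 0 := by
      rw [hE]
      refine Matrix.single_apply_of_ne _ _ _ _ _ ?_
      rintro ⟨rfl, rfl⟩
      exact hnadj (by rw [hsu, hsv]; exact hadj.symm)
    have e2 : Eᵀ i j = 0 := by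
      rw [hET]
      refine Matrix.single_apply_of_ne _ _ _ _ _ ?_
      rintro ⟨rfl, rfl⟩
      exact hnadj (by rw [hsu, hsv]; exact hadj)
    have e3 : Matrix.single j₀ j₀ (1:ℝ) i j = 0 := by
      refine Matrix.single_apply_of_ne _ _ _ _ _ ?_
      rintro ⟨rfl, rfl⟩
      exact hne rfl
    rw [e1, e2, e3]
    ring
  · -- L unit diagonal
    intro i
    rw [hL]
    simp only [Matrix.add_apply, Matrix.one_apply_eq]
    have : E i i = 0 := by
      rw [hE]
      refine Matrix.single_apply_of_ne _ _ _ _ _ ?_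
      rintro ⟨rfl, h'⟩
      exact hijne h'
    rw [this, add_zero]
  · -- L strictly lower triangular part
    intro i j hij'
    rw [hL]
    simp only [Matrix.add_apply, Matrix.one_apply_ne (ne_of_lt hij')]
    have : E i j = 0 := by
      rw [hE]
      refine Matrix.single_apply_of_ne _ _ _ _ _ ?_
      rintro ⟨rfl, rfl⟩
      exact absurd hij' (not_lt.mpr hij.le)
    rw [this, add_zero]
  · -- D = 1 off-diagonal
    intro i j hne
    exact Matrix.one_apply_ne hne
  · -- D = 1 positive diagonal
    intro i
    simp [Matrix.one_apply_eq]
  · -- A = L * D * Lᵀ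
    rw [hA, mul_one]
  · -- the determinant identity fails
    rw [hAinv]
    have hRHS : (∏ i ∈ C.image (fun x => σ x), 1 / (1 : Matrix (Fin p) (Fin p) ℝ) i i)
        = (1 : ℝ) := by
      refine Finset.prod_eq_one fun i _ => ?_
      simp [Matrix.one_apply_eq]
    rw [hRHS]
    have hLHS : principalDet B (C.image (fun x => σ x)) = 2 := by
      unfold principalDet
      have hdiag : B.submatrix
            (fun x : (C.image (fun x => σ x) : Finset (Fin p)) => (x : Fin p))
            (fun x : (C.image (fun x => σ x) : Finset (Fin p)) => (x : Fin p))
          = Matrix.diagonal (fun x : (C.image (fun x => σ x) : Finset (Fin p)) =>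
              if (x : Fin p) = i₀ then (2:ℝ) else 1) := by
        ext a b
        obtain ⟨a, ha⟩ := a
        obtain ⟨b, hb⟩ := b
        have haj : a ≠ j₀ := fun e => hj₀S (e ▸ ha)
        have hbj : b ≠ j₀ := fun e => hj₀S (e ▸ hb)
        have e1 : E a b = 0 := by
          rw [hE]
          exact Matrix.single_apply_of_ne _ _ _ _ _ (fun hc => haj hc.1.symm)
        have e2 : Eᵀ a b = 0 := by
          rw [hET]
          exact Matrix.single_apply_of_ne _ _ _ _ _ (fun hc => hbj hc.2.symm)
        have hBab : B a b = (if a = b then (1:ℝ) else 0)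
            + (if i₀ = a ∧ i₀ = b then (1:ℝ) else 0) := by
          rw [hBeq]
          simp only [Matrix.add_apply, Matrix.sub_apply, Matrix.one_apply, e1, e2,
            Matrix.single, Matrix.of_apply]
          ring
        simp only [Matrix.submatrix_apply, Matrix.diagonal_apply, hBab]
        by_cases hab : a = b
        · subst hab
          have hsub : (⟨a, ha⟩ : (C.image (fun x => σ x) : Finset (Fin p)))
              = ⟨a, hb⟩ := rfl
          rw [if_pos hsub]
          by_cases hai : a = i₀
          · subst hai
            norm_num
          · have h' : ¬ (i₀ = a ∧ i₀ = a) := fun hc => hai hc.1.symm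
            rw [if_pos rfl, if_neg h', if_neg hai, add_zero]
        · have hsub : (⟨a, ha⟩ : (C.image (fun x => σ x) : Finset (Fin p)))
              ≠ ⟨b, hb⟩ := fun e => hab (congrArg Subtype.val e)
          rw [if_neg hsub, if_neg hab]
          have : ¬ (i₀ = a ∧ i₀ = b) := fun hc => hab (hc.1.symm.trans hc.2)
          simp [this]
      rw [hdiag, Matrix.det_diagonal]
      rw [Fintype.prod_eq_single (⟨i₀, hi₀S⟩ : (C.image (fun x => σ x) : Finset (Fin p)))
        (fun b hbne => by
          have hb : (b : Fin p) ≠ i₀ := fun e => hbne (Subtype.ext e)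
          simp [hb])]
      simp
    rw [hLHS]
    norm_num
end

section
/- A finite simple graph G = (V,E) is homogeneous (i.e., for every edge (v,v') ∈ E, either N[v'] ⊆ N[v] or N[v] ⊆ N[v']) if and only if G is decomposable (chordal, containing no induced cycle of length ≥ 4) and contains no induced path on 4 vertices. -/
open Matrix BigOperators

/-- A finite simple graph is homogeneous iff it is decomposable (chordal) and has no
induced path on `4` vertices. -/
theorem statement11 {V : Type*} [Fintype V] (G : SimpleGraph V) :
    Homogeneous G ↔ (Decomposable G ∧ ¬ HasInducedPath4 G) := by
  constructor
  · intro h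
    have core : ∀ a b c d : V, G.Adj b c → G.Adj a b → G.Adj c d →
        a ≠ c → b ≠ d → ¬ G.Adj a c → ¬ G.Adj b d → False := by
      intro a b c d hbc hab hcd hac hbd hnac hnbd
      rcases h b c hbc with hsub | hsub
      · have hd : d ∈ cNbhd G c := Or.inr hcd.symm
        rcases hsub hd with h1 | h1
        · exact hbd h1.symm
        · exact hnbd h1.symm
      · have ha : a ∈ cNbhd G b := Or.inr hab
        rcases hsub ha with h1 | h1
        · exact hac h1
        · exact hnac h1
    constructor
    · rintro ⟨n, f, hn, hinj, hadj⟩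
      set i0 : Fin n := ⟨0, by omega⟩
      set i1 : Fin n := ⟨1, by omega⟩
      set i2 : Fin n := ⟨2, by omega⟩
      set i3 : Fin n := ⟨3, by omega⟩
      have h1n : (1 : ℕ) % n = 1 := Nat.mod_eq_of_lt (by omega)
      have h2n : (2 : ℕ) % n = 2 := Nat.mod_eq_of_lt (by omega)
      have h3n : (3 : ℕ) % n = 3 := Nat.mod_eq_of_lt (by omega)
      have h4n : (4 : ℕ) % n ≠ 1 ∧ (4 : ℕ) % n ≠ 3 := by
        rcases Nat.lt_or_ge n 5 with h5 | h5
        · have : n = 4 := by omega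
          subst this; simp
        · rw [Nat.mod_eq_of_lt (by omega)]; omega
      have e01 : G.Adj (f i0) (f i1) := (hadj i0 i1).mpr (by simp [i0, i1, h1n])
      have e12 : G.Adj (f i1) (f i2) := (hadj i1 i2).mpr (by simp [i1, i2, h2n])
      have e23 : G.Adj (f i2) (f i3) := (hadj i2 i3).mpr (by simp [i2, i3, h3n])
      have n02 : ¬ G.Adj (f i0) (f i2) := by
        rw [hadj i0 i2]; simp [i0, i2, h1n, h3n]
      have n13 : ¬ G.Adj (f i1) (f i3) := by
        rw [hadj i1 i3]
        have e2 : ((i1 : ℕ) + 1) % n = 2 := h2n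
        have e4 : ((i3 : ℕ) + 1) % n = 4 % n := rfl
        have v1 : (i1 : ℕ) = 1 := rfl
        have v3 : (i3 : ℕ) = 3 := rfl
        rw [e2, e4, v1, v3]
        push_neg
        exact ⟨by omega, h4n.1⟩
      have d02 : f i0 ≠ f i2 := fun e => by
        have := hinj e; simp [i0, i2, Fin.ext_iff] at this
      have d13 : f i1 ≠ f i3 := fun e => by
        have := hinj e; simp [i1, i3, Fin.ext_iff] at this
      exact core (f i0) (f i1) (f i2) (f i3) e12 e01 e23 d02 d13 n02 n13
    · rintro ⟨a, b, c, d, hab, hac, had, hbc, hbd, hcd, e1, e2, e3, n1, n2, n3⟩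
      exact core a b c d e2 e1 e3 hac hbd n1 n3
  · rintro ⟨hdec, hp4⟩
    intro v v' hvv'
    by_contra hcon
    push_neg at hcon
    obtain ⟨h1, h2⟩ := hcon
    obtain ⟨a, ha1, ha2⟩ := Set.not_subset.mp h1
    obtain ⟨b, hb1, hb2⟩ := Set.not_subset.mp h2
    -- a ∈ N[v'] \ N[v], b ∈ N[v] \ N[v']
    have hav : ¬ G.Adj a v := fun h => ha2 (Or.inr h)
    have hane : a ≠ v := fun h => ha2 (Or.inl h)
    have hbv' : ¬ G.Adj b v' := fun h => hb2 (Or.inr h)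
    have hbne : b ≠ v' := fun h => hb2 (Or.inl h)
    have hav' : G.Adj a v' := by
      rcases ha1 with h | h
      · exact absurd (Or.inr hvv'.symm) (h ▸ ha2)
      · exact h
    have hbv : G.Adj b v := by
      rcases hb1 with h | h
      · exact absurd (Or.inr hvv') (h ▸ hb2)
      · exact h
    have hanev' : a ≠ v' := fun h => G.irrefl (h ▸ hav')
    have hbnev : b ≠ v := fun h => G.irrefl (h ▸ hbv)
    have hanb : a ≠ b := fun h => hav (h ▸ hbv)
    by_cases hadj : G.Adj a b
    · -- induced 4-cycle a, v', v, b
      apply hdec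
      refine ⟨4, ![a, v', v, b], le_refl 4, ?_, ?_⟩
      · intro i j hij
        fin_cases i <;> fin_cases j <;>
          simp_all [hvv'.ne, hvv'.ne', hanev', hanev'.symm, hbnev, hbnev.symm]
      · intro i j
        have hva : ¬ G.Adj v a := fun h => hav h.symm
        have hv'b : ¬ G.Adj v' b := fun h => hbv' h.symm
        fin_cases i <;> fin_cases j <;>
          simp [hav', hav'.symm, hvv', hvv'.symm, hbv, hbv.symm, hadj, hadj.symm,
            hav, hva, hbv', hv'b, G.irrefl]
    · -- induced P4: a, v', v, b
      exact hp4 ⟨a, v', v, b, hanev', hane, hanb, hvv'.ne', hbne.symm,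
        hbnev.symm, hav', hvv'.symm, hbv.symm, hav, hadj, fun h => hbv' h.symm⟩
end

section
/- Let G = (V,E) be a homogeneous graph on p vertices, and let σ be a Hasse tree based elimination scheme for G. Then σ is a perfect vertex elimination scheme for G. -/
open Matrix BigOperators

/-- A Hasse tree based elimination scheme for a homogeneous graph is a perfect
vertex elimination scheme. -/
theorem statement12 {V : Type*} [Fintype V] {p : ℕ} (G : SimpleGraph V) (σ : V ≃ Fin p)
    (hhom : Homogeneous G) (hσ : HasseElimScheme G σ) :
    PerfectElimScheme G σ := by
  intro i j k hij hjk hba hca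
  set a := σ.symm i
  set b := σ.symm j
  set c := σ.symm k
  have hab : G.Adj a b := hba.symm
  have hsub : cNbhd G a ⊆ cNbhd G b := by
    rcases hhom a b hab with h | h
    · by_cases he : cNbhd G a = cNbhd G b
      · exact he.le
      · exfalso
        have := hσ a b h he
        simp only [a, b, Equiv.apply_symm_apply] at this
        exact absurd hij (not_lt.mpr this.le)
    · exact h
  have hc : c ∈ cNbhd G a := Or.inr hca
  rcases hsub hc with h | h
  · exfalso
    have : k = j := by
      have := congrArg σ h
      simpa [b, c] using this
    exact absurd hjk (by simp [this])
  · exact h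
end

section
/- Let G = (V,E) be a finite simple graph with |V| = m and σ an ordering of V, and suppose that for every m×m diagonal matrix D with positive diagonal entries and every m×m lower triangular matrix L with unit diagonal, L ∈ 𝓛_{G_σ} ⇔ L⁻¹ ∈ 𝓛_{G_σ} ⇔ LDLᵀ ∈ P_{G_σ}. Let G' be the induced subgraph of G on V ∖ {σ⁻¹(m)} and let σ' be the restriction of σ to V ∖ {σ⁻¹(m)} (an ordering of the m−1 remaining vertices). Then for every (m−1)×(m−1) diagonal matrix D* with positive diagonal entries and every (m−1)×(m−1) lower triangular matrix L* with unit diagonal, L* ∈ 𝓛_{G'_{σ'}} ⇔ (L*)⁻¹ ∈ 𝓛_{G'_{σ'}} ⇔ L*D*(L*)ᵀ ∈ P_{G'_{σ'}}. -/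
open Matrix BigOperators

section Aux
variable {p : ℕ}

/-- extend a p×p matrix to (p+1)×(p+1) with 1 in the corner. -/
def extM (A : Matrix (Fin p) (Fin p) ℝ) : Matrix (Fin (p+1)) (Fin (p+1)) ℝ :=
  (Matrix.fromBlocks A 0 0 (1 : Matrix (Fin 1) (Fin 1) ℝ)).submatrix
    finSumFinEquiv.symm finSumFinEquiv.symm

lemma fse_castSucc (i : Fin p) :
    (finSumFinEquiv.symm (Fin.castSucc i) : Fin p ⊕ Fin 1) = Sum.inl i := by
  rw [Equiv.symm_apply_eq, finSumFinEquiv_apply_left]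
  rfl

lemma fse_last :
    (finSumFinEquiv.symm (Fin.last p) : Fin p ⊕ Fin 1) = Sum.inr 0 := by
  rw [Equiv.symm_apply_eq, finSumFinEquiv_apply_right]
  ext; simp [Fin.natAdd]

@[simp] lemma extM_cc (A : Matrix (Fin p) (Fin p) ℝ) (i j : Fin p) :
    extM A (Fin.castSucc i) (Fin.castSucc j) = A i j := by
  simp [extM, fse_castSucc]

@[simp] lemma extM_cl (A : Matrix (Fin p) (Fin p) ℝ) (i : Fin p) :
    extM A (Fin.castSucc i) (Fin.last p) = 0 := by
  simp [extM, fse_castSucc, fse_last]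

@[simp] lemma extM_lc (A : Matrix (Fin p) (Fin p) ℝ) (j : Fin p) :
    extM A (Fin.last p) (Fin.castSucc j) = 0 := by
  simp [extM, fse_castSucc, fse_last]

@[simp] lemma extM_ll (A : Matrix (Fin p) (Fin p) ℝ) :
    extM A (Fin.last p) (Fin.last p) = 1 := by
  simp [extM, fse_last, Matrix.one_apply]

lemma extM_mul (A B : Matrix (Fin p) (Fin p) ℝ) :
    extM A * extM B = extM (A * B) := by
  unfold extM
  rw [Matrix.submatrix_mul_equiv, Matrix.fromBlocks_multiply]
  simp

lemma extM_one : extM (1 : Matrix (Fin p) (Fin p) ℝ) = 1 := by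
  unfold extM
  rw [Matrix.fromBlocks_one, Matrix.submatrix_one_equiv]

lemma extM_transpose (A : Matrix (Fin p) (Fin p) ℝ) : (extM A)ᵀ = extM Aᵀ := by
  unfold extM
  rw [Matrix.transpose_submatrix, Matrix.fromBlocks_transpose]
  simp

lemma conjT_real {m n : Type*} (M : Matrix m n ℝ) : Mᴴ = Mᵀ := by
  ext i j; simp [Matrix.conjTranspose_apply]

lemma extM_posDef {A : Matrix (Fin p) (Fin p) ℝ} (hA : A.PosDef) : (extM A).PosDef := by
  have hFB : (Matrix.fromBlocks A 0 0 (1 : Matrix (Fin 1) (Fin 1) ℝ)).PosDef := by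
    refine Matrix.PosDef.of_dotProduct_mulVec_pos ?_ ?_
    · have hAT : Aᵀ = A := by rw [← conjT_real, hA.1.eq]
      unfold Matrix.IsHermitian
      rw [conjT_real, Matrix.fromBlocks_transpose]
      simp [hAT]
    · intro x hx
      have hsum : star x ⬝ᵥ (Matrix.fromBlocks A 0 0 (1 : Matrix (Fin 1) (Fin 1) ℝ)) *ᵥ x
          = (x ∘ Sum.inl) ⬝ᵥ A *ᵥ (x ∘ Sum.inl) + (x ∘ Sum.inr) ⬝ᵥ (x ∘ Sum.inr) := by
        rw [Matrix.fromBlocks_mulVec]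
        simp only [Matrix.zero_mulVec, add_zero, zero_add, Matrix.one_mulVec, star_trivial]
        rw [dotProduct, Fintype.sum_sum_type]
        rfl
      rw [hsum]
      by_cases h1 : x ∘ Sum.inl = 0
      · have h2 : x ∘ Sum.inr ≠ 0 := by
          intro h2
          apply hx; ext (i | i)
          · exact congrFun h1 i
          · exact congrFun h2 i
        have : 0 < (x ∘ Sum.inr) ⬝ᵥ (x ∘ Sum.inr) := by
          rcases Function.ne_iff.mp h2 with ⟨i, hi⟩
          have : (0:ℝ) < (x (Sum.inr i))^2 := pow_two_pos_of_ne_zero hi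
          calc (0:ℝ) < (x (Sum.inr i))^2 := this
            _ ≤ (x ∘ Sum.inr) ⬝ᵥ (x ∘ Sum.inr) := by
              rw [dotProduct]
              have := Finset.single_le_sum (f := fun j => (x ∘ Sum.inr) j * (x ∘ Sum.inr) j)
                (fun j _ => mul_self_nonneg _) (Finset.mem_univ i)
              simpa [sq] using this
        have hAz : (x ∘ Sum.inl) ⬝ᵥ A *ᵥ (x ∘ Sum.inl) = 0 := by
          rw [h1]; simp
        linarith
      · have hApos : 0 < (x ∘ Sum.inl) ⬝ᵥ A *ᵥ (x ∘ Sum.inl) := by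
          have := hA.dotProduct_mulVec_pos (x := x ∘ Sum.inl) h1
          simpa using this
        have h2 : 0 ≤ (x ∘ Sum.inr) ⬝ᵥ (x ∘ Sum.inr) := by
          rw [dotProduct]
          exact Finset.sum_nonneg fun j _ => mul_self_nonneg _
        linarith
  -- transfer across submatrix equiv
  refine Matrix.PosDef.of_dotProduct_mulVec_pos ?_ ?_
  · unfold Matrix.IsHermitian
    rw [extM, Matrix.conjTranspose_submatrix, hFB.1.eq]
  · intro x hx
    have h := hFB.dotProduct_mulVec_pos (x := x ∘ finSumFinEquiv) (by
      intro h; apply hx; ext i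
      have := congrFun h (finSumFinEquiv.symm i)
      simpa using this)
    rw [extM]
    have hmv : (Matrix.fromBlocks A 0 0 (1 : Matrix (Fin 1) (Fin 1) ℝ)).submatrix
        finSumFinEquiv.symm finSumFinEquiv.symm *ᵥ x
        = ((Matrix.fromBlocks A 0 0 (1 : Matrix (Fin 1) (Fin 1) ℝ)) *ᵥ (x ∘ finSumFinEquiv))
          ∘ finSumFinEquiv.symm := by
      exact Matrix.submatrix_mulVec_equiv _ x finSumFinEquiv.symm finSumFinEquiv.symm
    rw [hmv]
    convert h using 1
    rw [dotProduct, dotProduct]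
    exact (Fintype.sum_equiv finSumFinEquiv _ _ (fun i => by simp)).symm

lemma posDef_conj {B D : Matrix (Fin p) (Fin p) ℝ} (hD : D.PosDef)
    (hB : IsUnit B.det) : (B * D * Bᵀ).PosDef := by
  refine Matrix.PosDef.of_dotProduct_mulVec_pos ?_ ?_
  · rw [← conjT_real B]
    exact Matrix.isHermitian_mul_mul_conjTranspose B hD.1
  · intro x hx
    have hinj : Function.Injective (Bᵀ.mulVec) :=
      Matrix.mulVec_injective_iff_isUnit.2
        ((Matrix.isUnit_iff_isUnit_det _).2 (by rwa [Matrix.det_transpose]))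
    have hy : Bᵀ *ᵥ x ≠ 0 := by
      intro h
      exact hx (hinj (by simpa using h))
    have := hD.dotProduct_mulVec_pos (x := Bᵀ *ᵥ x) hy
    have hcalc : star x ⬝ᵥ (B * D * Bᵀ) *ᵥ x = star (Bᵀ *ᵥ x) ⬝ᵥ D *ᵥ (Bᵀ *ᵥ x) := by
      simp only [star_trivial]
      rw [← Matrix.mulVec_mulVec, ← Matrix.mulVec_mulVec, dotProduct_mulVec,
        ← Matrix.mulVec_transpose]
    rw [hcalc]
    exact this

lemma lowerUnitri_det {L : Matrix (Fin p) (Fin p) ℝ} (hL : LowerUnitri L) :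
    L.det = 1 := by
  rw [Matrix.det_of_lowerTriangular L (fun i j h => hL.2 i j h)]
  simp [hL.1]

end Aux

/-- Claim 2 of Proposition 1: if the zero-preservation equivalences hold for
`(G, σ)` on `m = p + 1` vertices, they also hold for the induced subgraph `G'`
obtained by deleting the vertex `σ⁻¹(m)` with the highest label, together with the
restricted ordering `σ'`. -/
theorem statement13 {V : Type*} [Fintype V] {p : ℕ} (G : SimpleGraph V)
    (σ : V ≃ Fin (p + 1))
    (H : ∀ D : Matrix (Fin (p + 1)) (Fin (p + 1)) ℝ, PosDiag D →
      ∀ L : Matrix (Fin (p + 1)) (Fin (p + 1)) ℝ, LowerUnitri L →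
        ((memL G σ L ↔ memL G σ L⁻¹) ∧ (memL G σ L ↔ memP G σ (L * D * Lᵀ))))
    (σ' : ↥{v : V | v ≠ σ.symm (Fin.last p)} ≃ Fin p)
    (hσ' : ∀ u : ↥{v : V | v ≠ σ.symm (Fin.last p)},
      ((σ' u : Fin p) : ℕ) = ((σ u.val : Fin (p + 1)) : ℕ)) :
    ∀ D' : Matrix (Fin p) (Fin p) ℝ, PosDiag D' →
      ∀ L' : Matrix (Fin p) (Fin p) ℝ, LowerUnitri L' →
        ((memL (G.induce {v : V | v ≠ σ.symm (Fin.last p)}) σ' L' ↔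
            memL (G.induce {v : V | v ≠ σ.symm (Fin.last p)}) σ' L'⁻¹) ∧
          (memL (G.induce {v : V | v ≠ σ.symm (Fin.last p)}) σ' L' ↔
            memP (G.induce {v : V | v ≠ σ.symm (Fin.last p)}) σ' (L' * D' * L'ᵀ))) := by
  intro D' hD' L' hL'
  -- identify σ'.symm with σ.symm ∘ castSucc
  have hvert : ∀ i : Fin p,
      ((σ'.symm i : {v : V | v ≠ σ.symm (Fin.last p)}) : V) = σ.symm (Fin.castSucc i) := by
    intro i
    have hne : σ.symm (Fin.castSucc i) ∈ {v : V | v ≠ σ.symm (Fin.last p)} := by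
      simp only [Set.mem_setOf_eq]
      exact fun h => (Fin.castSucc_lt_last i).ne (σ.symm.injective h)
    have h2 : σ' ⟨σ.symm (Fin.castSucc i), hne⟩ = i := by
      have hval := hσ' ⟨σ.symm (Fin.castSucc i), hne⟩
      simp only [Equiv.apply_symm_apply] at hval
      exact Fin.ext (by rw [hval]; exact Fin.coe_castSucc i)
    have h3 := congrArg σ'.symm h2
    rw [Equiv.symm_apply_apply] at h3
    rw [← h3]
  have hadj : ∀ i j : Fin p,
      ((G.induce {v : V | v ≠ σ.symm (Fin.last p)}).Adj (σ'.symm i) (σ'.symm j) ↔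
        G.Adj (σ.symm (Fin.castSucc i)) (σ.symm (Fin.castSucc j))) := by
    intro i j
    rw [← hvert i, ← hvert j]
    simp [SimpleGraph.comap_adj]
  -- translation of memL
  have memL_iff : ∀ A : Matrix (Fin p) (Fin p) ℝ,
      (memL G σ (extM A) ↔ memL (G.induce {v : V | v ≠ σ.symm (Fin.last p)}) σ' A) := by
    intro A
    constructor
    · intro h
      refine ⟨fun i => by simpa using h.1 (Fin.castSucc i), ?_⟩
      intro i j hij hc
      have hne : Fin.castSucc i ≠ Fin.castSucc j :=
        fun h' => hij (Fin.castSucc_injective _ h')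
      have := h.2 (Fin.castSucc i) (Fin.castSucc j) hne ?_
      · simpa using this
      · rcases hc with h1 | h2
        · exact Or.inl (Fin.castSucc_lt_castSucc_iff.2 h1)
        · exact Or.inr fun ha => h2 ((hadj i j).2 ha)
    · intro h
      constructor
      · intro i
        induction i using Fin.lastCases with
        | last => simp
        | cast i => simpa using h.1 i
      · intro i j hij hc
        induction i using Fin.lastCases with
        | last =>
          induction j using Fin.lastCases with
          | last => exact absurd rfl hij
          | cast j => simp
        | cast i =>
          induction j using Fin.lastCases with
          | last => simp
          | cast j =>
            rw [extM_cc]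
            refine h.2 i j (fun h' => hij (by rw [h'])) ?_
            rcases hc with h1 | h2
            · exact Or.inl (Fin.castSucc_lt_castSucc_iff.1 h1)
            · exact Or.inr fun ha => h2 ((hadj i j).1 ha)
  -- translation of memP (given PosDef of the small matrix)
  have memP_iff : ∀ A : Matrix (Fin p) (Fin p) ℝ, A.PosDef →
      (memP G σ (extM A) ↔ memP (G.induce {v : V | v ≠ σ.symm (Fin.last p)}) σ' A) := by
    intro A hA
    constructor
    · intro h
      refine ⟨hA, ?_⟩
      intro i j hij hna
      have hne : Fin.castSucc i ≠ Fin.castSucc j :=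
        fun h' => hij (Fin.castSucc_injective _ h')
      have := h.2 (Fin.castSucc i) (Fin.castSucc j) hne (fun ha => hna ((hadj i j).2 ha))
      simpa using this
    · intro h
      refine ⟨extM_posDef hA, ?_⟩
      intro i j hij hna
      induction i using Fin.lastCases with
      | last =>
        induction j using Fin.lastCases with
        | last => exact absurd rfl hij
        | cast j => simp
      | cast i =>
        induction j using Fin.lastCases with
        | last => simp
        | cast j =>
          rw [extM_cc]
          exact h.2 i j (fun h' => hij (by rw [h']))
            (fun ha => hna ((hadj i j).1 ha))
  -- the extended matrices
  have hLu : LowerUnitri (extM L') := by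
    constructor
    · intro i
      induction i using Fin.lastCases with
      | last => simp
      | cast i => simpa using hL'.1 i
    · intro i j hlt
      induction i using Fin.lastCases with
      | last => exact absurd hlt (not_lt.2 (Fin.le_last j))
      | cast i =>
        induction j using Fin.lastCases with
        | last => simp
        | cast j =>
          rw [extM_cc]
          exact hL'.2 i j (Fin.castSucc_lt_castSucc_iff.1 hlt)
  have hDp : PosDiag (extM D') := by
    constructor
    · intro i j hij
      induction i using Fin.lastCases with
      | last =>
        induction j using Fin.lastCases with
        | last => exact absurd rfl hij
        | cast j => simp
      | cast i =>
        induction j using Fin.lastCases with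
        | last => simp
        | cast j =>
          rw [extM_cc]
          exact hD'.1 i j (fun h' => hij (by rw [h']))
    · intro i
      induction i using Fin.lastCases with
      | last => simp
      | cast i => simpa using hD'.2 i
  obtain ⟨hH1, hH2⟩ := H (extM D') hDp (extM L') hLu
  have hdet : IsUnit L'.det := by rw [lowerUnitri_det hL']; exact isUnit_one
  have hinv : (extM L')⁻¹ = extM L'⁻¹ := by
    apply Matrix.inv_eq_right_inv
    rw [extM_mul, Matrix.mul_nonsing_inv _ hdet, extM_one]
  have hprod : extM L' * extM D' * (extM L')ᵀ = extM (L' * D' * L'ᵀ) := by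
    rw [extM_transpose, extM_mul, extM_mul]
  have hD'pd : D'.PosDef := by
    have hdiag : D' = Matrix.diagonal (fun i => D' i i) := by
      ext i j
      by_cases h : i = j
      · subst h; simp
      · simp [Matrix.diagonal, h, hD'.1 i j h]
    rw [hdiag]
    exact Matrix.PosDef.diagonal hD'.2
  have hA' : (L' * D' * L'ᵀ).PosDef := posDef_conj hD'pd hdet
  refine ⟨(memL_iff L').symm.trans (hH1.trans ?_),
    (memL_iff L').symm.trans (hH2.trans ?_)⟩
  · rw [hinv]; exact memL_iff L'⁻¹
  · rw [hprod]; exact memP_iff _ hA'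
end

section
/- Let G = (V,E) be a homogeneous graph on p vertices, σ a Hasse tree based elimination scheme for G, and C a maximal clique of G. Let Σ ∈ P_{G_σ} with modified Cholesky decomposition Σ = LDLᵀ. Then for every vertex w ∉ C and every vertex u ∈ C, (L⁻¹)_{σ(w) σ(u)} = 0. -/
open Matrix BigOperators

/-- For a homogeneous graph with a Hasse tree based elimination scheme, a maximal
clique `C`, and `Σ ∈ P_{G_σ}` with Cholesky decomposition `Σ = LDLᵀ`, the entry
`(L⁻¹)_{σ(w) σ(u)}` vanishes whenever `w ∉ C` and `u ∈ C`. -/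
theorem statement14 {V : Type*} [Fintype V] {p : ℕ} (G : SimpleGraph V) (σ : V ≃ Fin p)
    (hhom : Homogeneous G) (hσ : HasseElimScheme G σ)
    (C : Finset V) (hC : IsMaxClique G C)
    (A L D : Matrix (Fin p) (Fin p) ℝ)
    (hA : memP G σ A) (hL : LowerUnitri L) (hD : PosDiag D)
    (hdec : A = L * D * Lᵀ) :
    ∀ w : V, w ∉ C → ∀ u : V, u ∈ C → L⁻¹ (σ w) (σ u) = 0 := by
  classical
  -- notation: M is the inverse of L
  set M := L⁻¹ with hM
  -- Transitivity lemma from homogeneity and the Hasse elimination scheme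
  have T : ∀ x y z : V, G.Adj x y → σ y < σ x → (z = y ∨ G.Adj z y) →
      (z = x ∨ G.Adj z x) := by
    intro x y z hxy hlt hz
    have hz' : z ∈ cNbhd G y := hz
    rcases hhom x y hxy with h | h
    · exact h hz'
    · by_cases he : cNbhd G x = cNbhd G y
      · have : z ∈ cNbhd G x := he ▸ hz'
        exact this
      · have := hσ y x h (fun e => he e.symm)
        exact absurd this (not_lt.mpr hlt.le)
  -- entries of A via the decomposition
  have hAentry : ∀ i j : Fin p, A i j = ∑ k, L i k * D k k * L j k := by
    intro i j
    rw [hdec, Matrix.mul_apply]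
    refine Finset.sum_congr rfl fun k _ => ?_
    rw [Matrix.transpose_apply, Matrix.mul_apply]
    rw [Finset.sum_eq_single k]
    · intro m _ hmk
      rw [hD.1 m k hmk, mul_zero]
    · intro h; exact absurd (Finset.mem_univ k) h
  -- Step 1: L has the zero pattern of G
  have step1 : ∀ n : ℕ, ∀ j i : Fin p, (j : ℕ) = n → j < i →
      ¬ G.Adj (σ.symm i) (σ.symm j) → L i j = 0 := by
    intro n
    induction n using Nat.strong_induction_on with
    | _ n IH =>
      intro j i hjn hji hadj
      have hij : i ≠ j := ne_of_gt hji
      have hA0 : A i j = 0 := hA.2 i j hij hadj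
      have hsum : (∑ k, L i k * D k k * L j k) = L i j * D j j := by
        rw [Finset.sum_eq_single j]
        · rw [hL.1 j, mul_one]
        · intro k _ hkj
          rcases lt_or_gt_of_ne hkj with hk | hk
          · by_cases hik : G.Adj (σ.symm i) (σ.symm k)
            · by_cases hjk : G.Adj (σ.symm j) (σ.symm k)
              · exfalso
                have hki : σ (σ.symm k) < σ (σ.symm i) := by
                  simpa using hk.trans hji
                rcases T (σ.symm i) (σ.symm k) (σ.symm j) hik hki (Or.inr hjk) with
                  h | h
                · exact hij (σ.symm.injective h).symm
                · exact hadj h.symm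
              · have : L j k = 0 :=
                  IH (k : ℕ) (by omega) k j rfl hk hjk
                rw [this, mul_zero]
            · have : L i k = 0 :=
                IH (k : ℕ) (by omega) k i rfl (hk.trans hji) hik
              rw [this, zero_mul, zero_mul]
          · rw [hL.2 j k hk, mul_zero]
        · intro h; exact absurd (Finset.mem_univ j) h
      have h0 : L i j * D j j = 0 := by
        rw [← hsum, ← hAentry i j, hA0]
      exact (mul_eq_zero.mp h0).resolve_right (ne_of_gt (hD.2 j))
  -- L is invertible with inverse lower triangular
  have hLtri : L.BlockTriangular OrderDual.toDual := fun i j h => hL.2 i j h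
  have hdet : L.det = 1 := by
    rw [Matrix.det_of_lowerTriangular L hLtri]
    simp [hL.1]
  have hunit : IsUnit L.det := by rw [hdet]; exact isUnit_one
  haveI : Invertible L := L.invertibleOfIsUnitDet hunit
  have hMtri : M.BlockTriangular OrderDual.toDual :=
    Matrix.blockTriangular_inv_of_blockTriangular hLtri
  have hMtri' : ∀ i j : Fin p, i < j → M i j = 0 := fun i j h => hMtri h
  have hML : M * L = 1 := Matrix.nonsing_inv_mul L hunit
  -- Step 2: M = L⁻¹ has the zero pattern of G
  have step2 : ∀ n : ℕ, ∀ i j : Fin p, (i : ℕ) - (j : ℕ) = n → j < i →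
      ¬ G.Adj (σ.symm i) (σ.symm j) → M i j = 0 := by
    intro n
    induction n using Nat.strong_induction_on with
    | _ n IH =>
      intro i j hn hji hadj
      have hij : i ≠ j := ne_of_gt hji
      have h1 : (1 : Matrix (Fin p) (Fin p) ℝ) i j = 0 := by
        simp [Matrix.one_apply, hij]
      have hsum : (∑ k, M i k * L k j) = M i j := by
        rw [Finset.sum_eq_single j]
        · rw [hL.1 j, mul_one]
        · intro k _ hkj
          rcases lt_or_gt_of_ne hkj with hk | hk
          · rw [hL.2 k j hk, mul_zero]
          · rcases lt_trichotomy k i with hki | hki | hki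
            · by_cases hik : G.Adj (σ.symm i) (σ.symm k)
              · by_cases hjk' : G.Adj (σ.symm k) (σ.symm j)
                · exfalso
                  have horder : σ (σ.symm k) < σ (σ.symm i) := by simpa using hki
                  rcases T (σ.symm i) (σ.symm k) (σ.symm j) hik horder
                      (Or.inr hjk'.symm) with h | h
                  · exact hij (σ.symm.injective h).symm
                  · exact hadj h.symm
                · rw [step1 (j : ℕ) j k rfl hk hjk', mul_zero]
              · rw [IH ((i : ℕ) - (k : ℕ)) (by omega) i k rfl hki hik, zero_mul]
            · subst hki
              rw [step1 (j : ℕ) j k rfl hk hadj, mul_zero]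
            · rw [hMtri' i k hki, zero_mul]
        · intro h; exact absurd (Finset.mem_univ j) h
      have : M i j = 0 := by
        rw [← hsum, ← Matrix.mul_apply, hML, h1]
      exact this
  -- Final assembly
  intro w hw u hu
  have hwu : w ≠ u := fun h => hw (h ▸ hu)
  rcases lt_trichotomy (σ w) (σ u) with h | h | h
  · exact hMtri' (σ w) (σ u) h
  · exact absurd (σ.injective h) hwu
  · -- show w and u are not adjacent
    have hadj : ¬ G.Adj w u := by
      intro hwu'
      -- there is a vertex of C not in N[w]
      have hnall : ¬ ∀ x ∈ C, x = w ∨ G.Adj x w := by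
        intro hall
        have hclique : G.IsClique (↑(insert w C) : Set V) := by
          intro a ha b hb hab
          simp only [Finset.coe_insert, Set.mem_insert_iff, Finset.mem_coe] at ha hb
          rcases ha with ha | ha <;> rcases hb with hb | hb
          · exact absurd (ha.trans hb.symm) hab
          · subst ha
            rcases hall b hb with h' | h'
            · exact absurd h'.symm hab
            · exact h'.symm
          · subst hb
            rcases hall a ha with h' | h'
            · exact absurd h' hab
            · exact h'
          · exact hC.1 ha hb hab
        have := hC.2 (insert w C) hclique (Finset.subset_insert w C)
        exact hw (this ▸ Finset.mem_insert_self w C)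
      push_neg at hnall
      obtain ⟨u', hu'C, hu'w, hu'adj⟩ := hnall
      have hu'N : u' ∈ cNbhd G u := by
        by_cases h' : u' = u
        · exact Or.inl h'
        · exact Or.inr (hC.1 hu'C hu h')
      rcases hhom w u hwu' with hN | hN
      · rcases hN hu'N with h' | h'
        · exact hu'w h'
        · exact hu'adj h'
      · have hne : cNbhd G u ≠ cNbhd G w := by
          intro he
          rcases he ▸ hu'N with h' | h'
          · exact hu'w h'
          · exact hu'adj h'
        have := hσ u w hN hne
        exact absurd h (not_lt.mpr this.le)
    have hadj' : ¬ G.Adj (σ.symm (σ w)) (σ.symm (σ u)) := by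
      simpa using hadj
    exact step2 ((σ w : ℕ) - (σ u : ℕ)) (σ w) (σ u) rfl h hadj'
end

section
/- Let G' = (V', E') be a homogeneous graph, let S ⊆ V' be a union of vertex sets of connected components of G', and let v ∉ V' be a new vertex. Define the graph G on vertex set V' ∪ {v} whose edge set is E' together with the edges (v,u) for every u ∈ S. Then G is a homogeneous graph; in particular, G contains no induced cycle on 4 vertices and no induced path on 4 vertices. -/
open Matrix BigOperators

/-- Adding a new vertex joined to a union of connected components of a homogeneous
graph yields a homogeneous graph; in particular, the new graph has no induced
`4`-cycle and no induced `4`-path.  The new vertex is modeled as `none : Option V'`. -/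
theorem statement15 {V' : Type*} [Fintype V'] (G' : SimpleGraph V') (S : Set V')
    (hS : ∀ u v : V', G'.Adj u v → (u ∈ S ↔ v ∈ S))
    (hG' : Homogeneous G')
    (G : SimpleGraph (Option V'))
    (hG : ∀ x y : Option V', G.Adj x y ↔
      ((∃ u w : V', x = some u ∧ y = some w ∧ G'.Adj u w) ∨
       (x = none ∧ ∃ u ∈ S, y = some u) ∨
       (y = none ∧ ∃ u ∈ S, x = some u))) :
    Homogeneous G ∧ ¬ HasInducedCycle4 G ∧ ¬ HasInducedPath4 G := by

  have hmono : ∀ u w : V', G'.Adj u w → cNbhd G' w ⊆ cNbhd G' u →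
      cNbhd G (some w) ⊆ cNbhd G (some u) := by
    intro u w hadj hsub z hz
    rcases hz with rfl | hz
    · rcases hsub (Or.inl rfl) with h | h
      · exact Or.inl (by rw [h])
      · exact Or.inr ((hG _ _).2 (Or.inl ⟨w, u, rfl, rfl, h⟩))
    · rcases (hG _ _).1 hz with ⟨a, b, rfl, hb, hab⟩ | ⟨rfl, u2, hu2, heq⟩ | ⟨hb, _⟩
      · injection hb with hb; subst hb
        rcases hsub (Or.inr hab) with h | h
        · exact Or.inl (by rw [h])
        · exact Or.inr ((hG _ _).2 (Or.inl ⟨a, u, rfl, rfl, h⟩))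
      · injection heq with heq; subst heq
        have huS := (hS u w hadj).2 hu2
        exact Or.inr ((hG _ _).2 (Or.inr (Or.inl ⟨rfl, u, huS, rfl⟩)))
      · exact absurd hb (by simp)
  have hnone : ∀ w : V', w ∈ S → cNbhd G (some w) ⊆ cNbhd G none := by
    intro w hwS z hz
    rcases hz with rfl | hz
    · exact Or.inr ((hG _ _).2 (Or.inr (Or.inr ⟨rfl, w, hwS, rfl⟩)))
    · rcases (hG _ _).1 hz with ⟨a, b, rfl, hb, hab⟩ | ⟨rfl, _⟩ | ⟨hb, _⟩
      · injection hb with hb; subst hb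
        have haS := (hS a w hab).2 hwS
        exact Or.inr ((hG _ _).2 (Or.inr (Or.inr ⟨rfl, a, haS, rfl⟩)))
      · exact Or.inl rfl
      · exact absurd hb (by simp)
  have hHom : Homogeneous G := by
    intro x y hxy
    rcases (hG x y).1 hxy with ⟨u, w, rfl, rfl, h⟩ | ⟨rfl, u, huS, rfl⟩ | ⟨rfl, u, huS, rfl⟩
    · rcases hG' u w h with h1 | h1
      · exact Or.inl (hmono u w h h1)
      · exact Or.inr (hmono w u h.symm h1)
    · exact Or.inl (hnone u huS)
    · exact Or.inr (hnone u huS)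
  refine ⟨hHom, ?_, ?_⟩
  · rintro ⟨a, b, c, d, hab', hac', had', hbc', hbd', hcd',
      hab, hbc, hcd, hda, hnac, hnbd⟩
    rcases hHom a b hab with h | h
    · rcases h (Or.inr hbc.symm) with h | h
      · exact hac' h.symm
      · exact hnac h.symm
    · rcases h (Or.inr hda) with h | h
      · exact hbd' h.symm
      · exact hnbd h.symm
  · rintro ⟨a, b, c, d, hab', hac', had', hbc', hbd', hcd',
      hab, hbc, hcd, hnac, hnad, hnbd⟩
    rcases hHom b c hbc with h | h
    · rcases h (Or.inr hcd.symm) with h | h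
      · exact hbd' h.symm
      · exact hnbd h.symm
    · rcases h (Or.inr hab) with h | h
      · exact hac' h
      · exact hnac h
end
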